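/- arXiv:1708.01754 — 11 statements merged into one kernel-verified Lean document; each statement's English description precedes it below -/
import Mathlib

section
/- Let (X_s)_{s∈S} be a family of T₁ spaces and (x_n)_{n∈ω} a sequence in X = ∏_{s∈S} X_s. Then (x_n) converges to a point x ∈ X in the box topology if and only if (x_n) converges to x in the product topology and there exist k ∈ ω and a finite set T ⊆ S such that for all n ≥ k, x_n agrees with x on all coordinates outside T. -/
open Filter Topology Set

/-- The box topology on a product of topological spaces: generated by all boxes
`∏ s, G s` with each `G s` open. -/
def boxTopology {S : Type*} {X : S → Type*} [∀ s, TopologicalSpace (X s)] :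
    TopologicalSpace (∀ s, X s) :=
  TopologicalSpace.generateFrom
    {U | ∃ G : ∀ s, Set (X s), (∀ s, IsOpen (G s)) ∧ U = Set.univ.pi G}

/-- `σ(a)`: the set of points differing from `a` in only finitely many coordinates. -/
def smallBox {S : Type*} {X : S → Type*} (a : ∀ s, X s) : Set (∀ s, X s) :=
  {x | {s | x s ≠ a s}.Finite}

/-- The box topology is finer than the product topology. -/
lemma boxTopology_le_pi {S : Type*} {X : S → Type*} [∀ s, TopologicalSpace (X s)] :
    (boxTopology : TopologicalSpace (∀ s, X s)) ≤ Pi.topologicalSpace := by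
  classical
  refine le_iInf fun s => ?_
  rw [← continuous_iff_le_induced (t₁ := boxTopology)]
  rw [continuous_def]
  intro G hG
  have : (fun (y : ∀ s, X s) => y s) ⁻¹' G =
      Set.univ.pi (Function.update (fun t => (Set.univ : Set (X t))) s G) := by
    ext y
    simp only [mem_preimage, Set.mem_pi, mem_univ, forall_true_left]
    constructor
    · intro h t
      rcases eq_or_ne t s with rfl | ht
      · simpa using h
      · simp [Function.update_of_ne ht]
    · intro h
      simpa using h s
  rw [this]
  exact TopologicalSpace.GenerateOpen.basic _
    ⟨_, fun t => by
      rcases eq_or_ne t s with rfl | ht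
      · simpa using hG
      · simp [Function.update_of_ne ht], rfl⟩

theorem stmt_2 {S : Type*} {X : S → Type*} [∀ s, TopologicalSpace (X s)]
    [∀ s, T1Space (X s)] (x : ℕ → ∀ s, X s) (l : ∀ s, X s) :
    Tendsto x atTop (@nhds (∀ s, X s) boxTopology l) ↔
      (Tendsto x atTop (nhds l) ∧
        ∃ k : ℕ, ∃ T : Finset S, ∀ n ≥ k, ∀ s ∉ T, x n s = l s) := by
  classical
  constructor
  · intro hbox
    refine ⟨hbox.mono_right (nhds_mono boxTopology_le_pi), ?_⟩
    by_contra h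
    push_neg at h
    -- h : ∀ k T, ∃ n ≥ k, ∃ s ∉ T, x n s ≠ l s
    choose n hn s hs hne using h
    -- build the sequence of states
    set f : ℕ → ℕ × Finset S := fun i =>
      Nat.rec (n 0 ∅, {s 0 ∅}) (fun _ p => (n (p.1 + 1) p.2, insert (s (p.1 + 1) p.2) p.2)) i
      with hf
    set σ : ℕ → S := fun i =>
      Nat.rec (s 0 ∅) (fun i _ => s ((f i).1 + 1) (f i).2) i with hσ
    have hfsucc : ∀ i, f (i + 1) =
        (n ((f i).1 + 1) (f i).2, insert (s ((f i).1 + 1) (f i).2) (f i).2) := fun i => rfl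
    have hσsucc : ∀ i, σ (i + 1) = s ((f i).1 + 1) (f i).2 := fun i => rfl
    -- key properties
    have hne' : ∀ i, x (f i).1 (σ i) ≠ l (σ i) := by
      intro i
      cases i with
      | zero => exact hne 0 ∅
      | succ i => rw [hfsucc, hσsucc]; exact hne _ _
    have hmem : ∀ i, σ i ∈ (f i).2 := by
      intro i
      cases i with
      | zero => exact Finset.mem_singleton_self _
      | succ i => rw [hfsucc, hσsucc]; exact Finset.mem_insert_self _ _
    have hsub : ∀ i, (f i).2 ⊆ (f (i + 1)).2 := by
      intro i
      rw [hfsucc]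
      exact Finset.subset_insert _ _
    have hmono : ∀ i j, i ≤ j → (f i).2 ⊆ (f j).2 := by
      intro i j hij
      induction j with
      | zero => rw [Nat.le_zero.mp hij]
      | succ j ih =>
        rcases Nat.lt_or_ge i (j + 1) with h' | h'
        · exact (ih (Nat.lt_succ_iff.mp h')).trans (hsub j)
        · rw [Nat.le_antisymm hij h']
    have hnotmem : ∀ i, σ (i + 1) ∉ (f i).2 := by
      intro i; rw [hσsucc]; exact hs _ _
    have hinj : Function.Injective σ := by
      have key : ∀ i j, i < j → σ i ≠ σ j := by
        intro i j hij heq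
        cases j with
        | zero => exact absurd hij (Nat.not_lt_zero i)
        | succ m =>
          exact hnotmem m (heq ▸ hmono i m (Nat.lt_succ_iff.mp hij) (hmem i))
      intro i j hij
      by_contra hne2
      rcases Nat.lt_or_ge i j with h' | h'
      · exact key i j h' hij
      · exact key j i (lt_of_le_of_ne h' (Ne.symm hne2)) hij.symm
    have hlt : ∀ i, (f i).1 < (f (i + 1)).1 := by
      intro i
      rw [hfsucc]
      exact Nat.lt_of_succ_le (hn _ _)
    have hge : ∀ i, i ≤ (f i).1 := by
      intro i
      induction i with
      | zero => exact Nat.zero_le _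
      | succ i ih => exact Nat.succ_le_of_lt (lt_of_le_of_lt ih (hlt i))
    -- the bad box
    set G : ∀ t, Set (X t) := fun t =>
      if h : ∃ i, σ i = t then {x (f h.choose).1 t}ᶜ else Set.univ with hG
    have hGspec : ∀ j, G (σ j) = {x (f j).1 (σ j)}ᶜ := by
      intro j
      rw [hG]
      dsimp only
      rw [dif_pos ⟨j, rfl⟩]
      have hch : (⟨j, rfl⟩ : ∃ i, σ i = σ j).choose = j :=
        hinj (⟨j, rfl⟩ : ∃ i, σ i = σ j).choose_spec
      rw [hch]
    have hGopen : ∀ t, IsOpen (G t) := by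
      intro t
      rw [hG]
      dsimp only
      split
      · exact isOpen_compl_singleton
      · exact isOpen_univ
    have hlmem : l ∈ Set.univ.pi G := by
      intro t _
      by_cases h' : ∃ i, σ i = t
      · obtain ⟨j, hj⟩ := h'
        subst hj
        rw [hGspec j]
        simp only [mem_compl_iff, mem_singleton_iff]
        exact (hne' j).symm
      · rw [hG]
        dsimp only
        rw [dif_neg h']
        trivial
    have hxnotmem : ∀ i, x (f i).1 ∉ Set.univ.pi G := by
      intro i hi
      have := hi (σ i) (mem_univ _)
      rw [hGspec i] at this
      exact this rfl
    have hopen : IsOpen[boxTopology] (Set.univ.pi G) :=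
      TopologicalSpace.GenerateOpen.basic _ ⟨G, hGopen, rfl⟩
    have hnhds : Set.univ.pi G ∈ @nhds _ boxTopology l :=
      @IsOpen.mem_nhds _ boxTopology l _ hopen hlmem
    have hev := hbox hnhds
    rw [mem_map, mem_atTop_sets] at hev
    obtain ⟨N, hN⟩ := hev
    exact hxnotmem N (hN (f N).1 (hge N))
  · rintro ⟨hprod, k, T, hT⟩
    rw [boxTopology, TopologicalSpace.tendsto_nhds_generateFrom_iff]
    rintro U ⟨G, hGopen, rfl⟩ hlU
    have h1 : ∀ᶠ n in atTop, ∀ t ∈ T, x n t ∈ G t := by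
      rw [eventually_all_finset]
      intro t _
      exact (tendsto_pi_nhds.mp hprod t) ((hGopen t).mem_nhds (hlU t (mem_univ t)))
    filter_upwards [h1, eventually_ge_atTop k] with m h1n h2n
    intro t _
    by_cases ht : t ∈ T
    · exact h1n t ht
    · rw [hT m h2n t ht]
      exact hlU t (mem_univ t)
end

section
/- Let X be a first countable topological space, (Y_s)_{s∈S} a family of T₁ spaces, and f : X → □_{s∈S} Y_s a continuous map into the box product. Then for every x ∈ X there exist an open neighborhood U of x and a finite set T ⊆ S such that f(z) agrees with f(x) on all coordinates in S∖T for every z ∈ U. In particular, f(U) ⊆ σ(f(x)). -/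
open Filter Topology Set

theorem stmt_3 {X : Type*} [TopologicalSpace X] [FirstCountableTopology X]
    {S : Type*} {Y : S → Type*} [∀ s, TopologicalSpace (Y s)] [∀ s, T1Space (Y s)]
    (f : X → ∀ s, Y s)
    (hf : @Continuous X (∀ s, Y s) _ boxTopology f) (x : X) :
    ∃ U : Set X, IsOpen U ∧ x ∈ U ∧ ∃ T : Finset S,
      (∀ z ∈ U, ∀ s ∉ T, f z s = f x s) ∧ ∀ z ∈ U, f z ∈ smallBox (f x) := by
  classical
  have key : ∃ U : Set X, IsOpen U ∧ x ∈ U ∧ ∃ T : Finset S,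
      ∀ z ∈ U, ∀ s ∉ T, f z s = f x s := by
    by_contra hcon
    push_neg at hcon
    -- restate: for every neighborhood and finite set, a bad point exists
    have h' : ∀ (T : Finset S) (U : Set X), U ∈ 𝓝 x →
        ∃ z, z ∈ U ∧ ∃ s, s ∉ T ∧ f z s ≠ f x s := by
      intro T U hU
      obtain ⟨z, hz, s, hs, hne⟩ :=
        hcon (interior U) isOpen_interior (mem_interior_iff_mem_nhds.2 hU) T
      exact ⟨z, interior_subset hz, s, hs, hne⟩
    choose z hz s hs hne using h'
    obtain ⟨u, hu⟩ := (𝓝 x).exists_antitone_basis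
    have hun : ∀ n, u n ∈ 𝓝 x := fun n => hu.1.mem_of_mem trivial
    -- recursively build finite sets of used coordinates
    set Tn : ℕ → Finset S :=
      fun n => Nat.rec ∅ (fun k T => insert (s T (u k) (hun k)) T) n with hTn
    set sn : ℕ → S := fun n => s (Tn n) (u n) (hun n) with hsn
    set zn : ℕ → X := fun n => z (Tn n) (u n) (hun n) with hzn
    have hTsucc : ∀ n, Tn (n + 1) = insert (sn n) (Tn n) := fun n => rfl
    have hmono : ∀ m n, m ≤ n → Tn m ⊆ Tn n := by
      intro m n hmn
      induction n with
      | zero => simp_all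
      | succ k ih =>
        rcases Nat.lt_or_ge m (k+1) with h | h
        · exact (ih (Nat.lt_succ_iff.1 h)).trans
            (by rw [hTsucc]; exact Finset.subset_insert _ _)
        · have : m = k + 1 := le_antisymm hmn h
          subst this; rfl
    have hmem : ∀ m n, m < n → sn m ∈ Tn n := by
      intro m n hmn
      exact hmono (m+1) n hmn (by rw [hTsucc]; exact Finset.mem_insert_self _ _)
    have hinj : Function.Injective sn := by
      intro a b hab
      by_contra hne'
      rcases Nat.lt_or_ge a b with h | h
      · have h1 : sn b ∈ Tn b := by rw [← hab]; exact hmem a b h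
        exact hs (Tn b) (u b) (hun b) h1
      · have h2 : b < a := lt_of_le_of_ne h (Ne.symm hne')
        have h1 : sn a ∈ Tn a := by rw [hab]; exact hmem b a h2
        exact hs (Tn a) (u a) (hun a) h1
    -- the box open set
    set G : ∀ t, Set (Y t) := fun t =>
      if h : ∃ n, sn n = t then {f (zn h.choose) t}ᶜ else Set.univ with hG
    have hGdef : ∀ t (h : ∃ n, sn n = t), G t = {f (zn h.choose) t}ᶜ :=
      fun t h => dif_pos h
    have hGuniv : ∀ t, (¬∃ n, sn n = t) → G t = Set.univ := fun t h => dif_neg h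
    have hGopen : ∀ t, IsOpen (G t) := by
      intro t
      by_cases h : ∃ n, sn n = t
      · rw [hGdef t h]; exact isOpen_compl_singleton
      · rw [hGuniv t h]; exact isOpen_univ
    have hBox : @IsOpen _ boxTopology (Set.univ.pi G) :=
      TopologicalSpace.GenerateOpen.basic _ ⟨G, hGopen, rfl⟩
    have hxmem : f x ∈ Set.univ.pi G := by
      intro t _
      by_cases h : ∃ n, sn n = t
      · rw [hGdef t h]
        obtain hc := h.choose_spec
        have hne' : f (zn h.choose) (sn h.choose) ≠ f x (sn h.choose) :=
          hne (Tn h.choose) (u h.choose) (hun h.choose)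
        rw [hc] at hne'
        simp only [mem_compl_iff, mem_singleton_iff]
        exact fun he => hne' he.symm
      · rw [hGuniv t h]; trivial
    have hznot : ∀ n, f (zn n) ∉ Set.univ.pi G := by
      intro n hmem'
      have hthis := hmem' (sn n) trivial
      have hex : ∃ m, sn m = sn n := ⟨n, rfl⟩
      rw [hGdef (sn n) hex] at hthis
      have heq : hex.choose = n := hinj hex.choose_spec
      rw [heq] at hthis
      simp at hthis
    have hpre : f ⁻¹' (Set.univ.pi G) ∈ 𝓝 x :=
      (@Continuous.isOpen_preimage X _ _ boxTopology f hf _ hBox).mem_nhds hxmem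
    obtain ⟨n, hn⟩ := hu.1.mem_iff.1 hpre
    exact hznot n (hn.2 (hz (Tn n) (u n) (hun n)))
  obtain ⟨U, hUo, hxU, T, hT⟩ := key
  refine ⟨U, hUo, hxU, T, hT, fun z hz => ?_⟩
  exact (T.finite_toSet).subset fun s hsne => by
    by_contra hsT
    exact hsne (hT z hz s hsT)
end

section
/- Let (X_s)_{s∈S} be a family of Hausdorff spaces and X ⊆ □_{s∈S} X_s a connected, path-connected subspace of the box product. Then there exists x* ∈ X such that every point of X differs from x* in only finitely many coordinates, i.e., X ⊆ σ(x*). -/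
open Filter Topology Set

section Aux

variable {S : Type*} {X : S → Type*}

lemma smallBox_refl (a : ∀ s, X s) : a ∈ smallBox a := by
  simp [smallBox]

lemma smallBox_symm {a b : ∀ s, X s} (h : a ∈ smallBox b) : b ∈ smallBox a :=
  Set.Finite.subset h fun s hs => Ne.symm hs

lemma smallBox_trans {a b c : ∀ s, X s} (h1 : a ∈ smallBox b) (h2 : b ∈ smallBox c) :
    a ∈ smallBox c := by
  refine Set.Finite.subset (Set.Finite.union h1 h2) fun s hs => ?_
  rcases eq_or_ne (a s) (b s) with h | h
  · exact Or.inr (fun hbc => hs (h.trans hbc))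
  · exact Or.inl h

/-- Pick pairwise-distinct representatives of a sequence of infinite sets. -/
noncomputable def pick (D : ℕ → Set S) (hD : ∀ n, (D n).Infinite) : ℕ → S
  | n => ((hD n).diff (Set.finite_range fun k : Fin n => pick D hD k)).nonempty.choose
termination_by n => n
decreasing_by all_goals exact k.2

lemma pick_spec (D : ℕ → Set S) (hD : ∀ n, (D n).Infinite) (n : ℕ) :
    pick D hD n ∈ D n \ Set.range (fun k : Fin n => pick D hD k) := by
  rw [pick]
  exact ((hD n).diff (Set.finite_range fun k : Fin n => pick D hD k)).nonempty.choose_spec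

lemma pick_mem (D : ℕ → Set S) (hD : ∀ n, (D n).Infinite) (n : ℕ) :
    pick D hD n ∈ D n := (pick_spec D hD n).1

lemma pick_injective (D : ℕ → Set S) (hD : ∀ n, (D n).Infinite) :
    Function.Injective (pick D hD) := by
  intro m n h
  by_contra hne
  rcases lt_or_gt_of_ne hne with hlt | hlt
  · exact (pick_spec D hD n).2 ⟨⟨m, hlt⟩, h⟩
  · exact (pick_spec D hD m).2 ⟨⟨n, hlt⟩, h.symm⟩

variable [∀ s, TopologicalSpace (X s)] [∀ s, T2Space (X s)]

lemma isOpen_box {G : ∀ s, Set (X s)} (hG : ∀ s, IsOpen (G s)) :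
    IsOpen[boxTopology] (Set.univ.pi G) :=
  TopologicalSpace.isOpen_generateFrom_of_mem ⟨G, hG, rfl⟩

/-- Key local lemma: a map into the box product which is continuous at `t`
eventually stays within `smallBox (f t)`. -/
lemma eventually_smallBox {T : Type*} [TopologicalSpace T]
    [FirstCountableTopology T]
    {f : T → ∀ s, X s} (hf : Continuous[_, boxTopology] f) (t : T) :
    ∀ᶠ u in 𝓝 t, f u ∈ smallBox (f t) := by
  classical
  by_contra h
  rw [Filter.not_eventually] at h
  obtain ⟨u, hu, hmem⟩ := Filter.exists_seq_forall_of_frequently h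
  set D : ℕ → Set S := fun n => {s | f (u n) s ≠ f t s} with hDdef
  have hD : ∀ n, (D n).Infinite := fun n => hmem n
  set p : ℕ → S := pick D hD with hp
  set G : ∀ s, Set (X s) := fun s =>
    if h : ∃ n, p n = s then {f (u h.choose) s}ᶜ else Set.univ with hGdef
  have hGopen : ∀ s, IsOpen (G s) := by
    intro s
    rw [hGdef]
    dsimp only
    split
    · exact isClosed_singleton.isOpen_compl
    · exact isOpen_univ
  have hmemt : f t ∈ Set.univ.pi G := by
    intro s _
    rw [hGdef]
    dsimp only
    split
    · next hex =>
      have hps : p hex.choose = s := hex.choose_spec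
      have : f (u hex.choose) (p hex.choose) ≠ f t (p hex.choose) :=
        pick_mem D hD hex.choose
      rw [hps] at this
      simpa using this.symm
    · trivial
  have hnot : ∀ n, f (u n) ∉ Set.univ.pi G := by
    intro n hn
    have h1 := hn (p n) trivial
    rw [hGdef] at h1
    dsimp only at h1
    rw [dif_pos ⟨n, rfl⟩] at h1
    have hch : (⟨n, rfl⟩ : ∃ m, p m = p n).choose = n :=
      pick_injective D hD (⟨n, rfl⟩ : ∃ m, p m = p n).choose_spec
    rw [hch] at h1
    simp at h1
  have hopen := continuous_def.mp hf _ (isOpen_box hGopen)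
  have hnhds : f ⁻¹' (Set.univ.pi G) ∈ 𝓝 t := hopen.mem_nhds hmemt
  obtain ⟨n, hn⟩ := (hu.eventually hnhds).exists
  exact hnot n hn

lemma smallBox_of_joined {x y : ∀ s, X s}
    (h : @Joined _ boxTopology x y) : y ∈ smallBox x := by
  letI : TopologicalSpace (∀ s, X s) := boxTopology
  obtain ⟨γ⟩ := h
  set E : Set unitInterval := {t | γ t ∈ smallBox x} with hE
  have key : ∀ t : unitInterval, ∀ᶠ v in 𝓝 t, γ v ∈ smallBox (γ t) :=
    fun t => eventually_smallBox γ.continuous t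
  have hopen : IsOpen E := by
    rw [isOpen_iff_mem_nhds]
    intro t ht
    exact (key t).mono fun v hv => smallBox_trans hv ht
  have hclosed : IsClosed E := by
    rw [← isOpen_compl_iff, isOpen_iff_mem_nhds]
    intro t ht
    refine (key t).mono fun v hv hvE => ht ?_
    exact smallBox_trans (smallBox_symm hv) hvE
  have h0 : (0 : unitInterval) ∈ E := by
    show γ 0 ∈ smallBox x
    rw [γ.source]
    exact smallBox_refl x
  have huniv : E = Set.univ :=
    (isClopen_iff.mp ⟨hclosed, hopen⟩).resolve_left (Set.nonempty_iff_ne_empty.mp ⟨0, h0⟩)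
  have h1 : (1 : unitInterval) ∈ E := huniv ▸ Set.mem_univ _
  have h1' : γ 1 ∈ smallBox x := h1
  rw [γ.target] at h1'
  exact h1'

end Aux

theorem stmt_4 {S : Type*} {X : S → Type*} [∀ s, TopologicalSpace (X s)]
    [∀ s, T2Space (X s)] :
    letI : TopologicalSpace (∀ s, X s) := boxTopology
    ∀ A : Set (∀ s, X s), IsConnected A → IsPathConnected A →
      ∃ a ∈ A, A ⊆ smallBox a := by
  letI : TopologicalSpace (∀ s, X s) := boxTopology
  intro A _hconn hpc
  obtain ⟨a, haA, h⟩ := hpc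
  exact ⟨a, haA, fun x hx => smallBox_of_joined ((h hx).joined)⟩
end

section
/- Let (X_s)_{s∈S} be a family of functionally Hausdorff spaces and X ⊆ □_{s∈S} X_s a connected subspace of the box product. Then there exists x* ∈ X such that X ⊆ σ(x*), i.e., every point of X differs from x* in only finitely many coordinates. -/
open Filter Topology Set

lemma box_isOpen {S : Type*} {X : S → Type*} [∀ s, TopologicalSpace (X s)]
    (G : ∀ s, Set (X s)) (hG : ∀ s, IsOpen (G s)) :
    IsOpen[boxTopology] (Set.univ.pi G) :=
  TopologicalSpace.GenerateOpen.basic _ ⟨G, hG, rfl⟩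

/-- A "sequence of coordinate constraints" set is open in the box topology. -/
lemma seq_isOpen {S : Type*} {X : S → Type*} [∀ s, TopologicalSpace (X s)]
    (s : ℕ → S) (hs : Function.Injective s)
    (g : ∀ n, X (s n) → ℝ) (hg : ∀ n, Continuous (g n))
    (U : ℕ → Set ℝ) (hU : ∀ n, IsOpen (U n)) :
    IsOpen[boxTopology] {y : ∀ s', X s' | ∀ n, g n (y (s n)) ∈ U n} := by
  have key : {y : ∀ s', X s' | ∀ n, g n (y (s n)) ∈ U n} =
      Set.univ.pi (fun s' => {t : X s' | ∀ n, ∀ hn : s n = s',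
        g n (cast (congrArg X hn.symm) t) ∈ U n}) := by
    ext y
    constructor
    · intro hy s' _ n hn
      subst hn
      rw [cast_eq]
      exact hy n
    · intro hy n
      have := hy (s n) (Set.mem_univ _) n rfl
      rwa [cast_eq] at this
  rw [key]
  apply box_isOpen
  intro s'
  by_cases h : ∃ n, s n = s'
  · obtain ⟨n₀, hn₀⟩ := h
    subst hn₀
    have heq : {t : X (s n₀) | ∀ n, ∀ hn : s n = s n₀,
        g n (cast (congrArg X hn.symm) t) ∈ U n} = g n₀ ⁻¹' U n₀ := by
      ext t
      constructor
      · intro ht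
        have := ht n₀ rfl
        rwa [cast_eq] at this
      · intro ht n hn
        obtain rfl : n = n₀ := hs hn
        rw [cast_eq]
        exact ht
    rw [heq]
    exact (hU n₀).preimage (hg n₀)
  · have heq : {t : X s' | ∀ n, ∀ hn : s n = s',
        g n (cast (congrArg X hn.symm) t) ∈ U n} = Set.univ := by
      ext t
      simp only [Set.mem_univ, iff_true, Set.mem_setOf_eq]
      intro n hn
      exact absurd ⟨n, hn⟩ h
    rw [heq]
    exact isOpen_univ

theorem stmt_5 {S : Type*} {X : S → Type*} [∀ s, TopologicalSpace (X s)]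
    (hFH : ∀ s, ∀ x y : X s, x ≠ y →
      ∃ f : X s → unitInterval, Continuous f ∧ f x ≠ f y) :
    letI : TopologicalSpace (∀ s, X s) := boxTopology
    ∀ A : Set (∀ s, X s), IsConnected A → ∃ a ∈ A, A ⊆ smallBox a := by
  classical
  letI : TopologicalSpace (∀ s, X s) := boxTopology
  intro A hA
  obtain ⟨⟨a, ha⟩, hconn⟩ := hA
  refine ⟨a, ha, fun x hx => ?_⟩
  by_contra hinf
  have hT : {s | x s ≠ a s}.Infinite := hinf
  let e := hT.natEmbedding
  set s : ℕ → S := fun n => (e n).1 with hsdef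
  have hs : Function.Injective s := fun m n h => e.injective (Subtype.ext h)
  have hne : ∀ n, x (s n) ≠ a (s n) := fun n => (e n).2
  choose f hfc hfne using fun n => hFH (s n) (x (s n)) (a (s n)) (hne n)
  set c : ℕ → ℝ := fun n => |(f n (x (s n)) : ℝ) - (f n (a (s n)) : ℝ)| with hcdef
  have hc : ∀ n, 0 < c n := by
    intro n
    rw [hcdef, abs_pos, sub_ne_zero]
    exact fun h => hfne n (Subtype.coe_injective h)
  set g : ∀ n, X (s n) → ℝ :=
    fun n t => min 1 (|(f n t : ℝ) - (f n (a (s n)) : ℝ)| / c n) with hgdef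
  have hgc : ∀ n, Continuous (g n) := by
    intro n
    exact continuous_const.min
      ((((continuous_subtype_val.comp (hfc n)).sub continuous_const).abs).div_const _)
  have hg0 : ∀ n t, 0 ≤ g n t := fun n t =>
    le_min one_pos.le (div_nonneg (abs_nonneg _) (hc n).le)
  have hga : ∀ n, g n (a (s n)) = 0 := by
    intro n
    simp [hgdef]
  have hgx : ∀ n, g n (x (s n)) = 1 := by
    intro n
    rw [hgdef]
    simp only [div_self (hc n).ne']
    have h1 : |(f n (x (s n)) : ℝ) - (f n (a (s n)) : ℝ)| / c n = 1 := div_self (hc n).ne'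
    rw [h1]
    exact min_self (1:ℝ)
  set W : Set (∀ s', X s') :=
    {y | Tendsto (fun n => g n (y (s n))) atTop (𝓝 0)} with hWdef
  have hWopen : IsOpen W := by
    rw [isOpen_iff_forall_mem_open]
    intro y hy
    refine ⟨{z | ∀ n, g n (z (s n)) ∈ Set.Iio (g n (y (s n)) + 1/(n+1))}, ?_, ?_, ?_⟩
    · intro z hz
      rw [hWdef]
      refine squeeze_zero (fun n => hg0 n _) (fun n => (hz n).le) ?_
      have h1 : Tendsto (fun n : ℕ => g n (y (s n)) + 1/(n+1)) atTop (𝓝 (0 + 0)) :=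
        hy.add tendsto_one_div_add_atTop_nhds_zero_nat
      simpa using h1
    · exact seq_isOpen s hs g hgc _ (fun n => isOpen_Iio)
    · intro n
      simp only [Set.mem_Iio]
      have : (0:ℝ) < 1/(n+1) := by positivity
      linarith
  have hWcopen : IsOpen Wᶜ := by
    rw [isOpen_iff_forall_mem_open]
    intro y hy
    have hny : ¬ Tendsto (fun n => g n (y (s n))) atTop (𝓝 0) := hy
    rw [Metric.tendsto_atTop] at hny
    push_neg at hny
    obtain ⟨ε, hε, hfreq⟩ := hny
    refine ⟨{z | ∀ n, g n (z (s n)) ∈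
        (if ε ≤ g n (y (s n)) then Set.Ioi (ε/2) else Set.univ)}, ?_, ?_, ?_⟩
    · intro z hz hzW
      have hzt : Tendsto (fun n => g n (z (s n))) atTop (𝓝 0) := hzW
      rw [Metric.tendsto_atTop] at hzt
      obtain ⟨N, hN⟩ := hzt (ε/2) (by linarith)
      obtain ⟨n, hnN, hge⟩ := hfreq N
      rw [Real.dist_eq, sub_zero, abs_of_nonneg (hg0 n _)] at hge
      have hzn := hz n
      rw [if_pos hge] at hzn
      have := hN n hnN
      rw [Real.dist_eq, sub_zero, abs_of_nonneg (hg0 n _)] at this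
      exact absurd hzn (by simp only [Set.mem_Ioi]; linarith)
    · refine seq_isOpen s hs g hgc _ (fun n => ?_)
      split
      · exact isOpen_Ioi
      · exact isOpen_univ
    · intro n
      by_cases h : ε ≤ g n (y (s n))
      · rw [if_pos h]; simp only [Set.mem_Ioi]; linarith
      · rw [if_neg h]; trivial
  have haW : a ∈ W := by
    rw [hWdef]
    simp only [Set.mem_setOf_eq]
    have : (fun n => g n (a (s n))) = fun _ => (0:ℝ) := funext fun n => hga n
    rw [this]
    exact tendsto_const_nhds
  have hxW : x ∈ Wᶜ := by
    intro hxW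
    have hxt : Tendsto (fun n => g n (x (s n))) atTop (𝓝 0) := hxW
    have : (fun n => g n (x (s n))) = fun _ => (1:ℝ) := funext fun n => hgx n
    rw [this] at hxt
    have := tendsto_nhds_unique hxt (tendsto_const_nhds)
    norm_num at this
  obtain ⟨z, _, hzW, hzWc⟩ := hconn W Wᶜ hWopen hWcopen
    (fun y _ => Classical.em (y ∈ W)) ⟨a, ha, haW⟩ ⟨x, hx, hxW⟩
  exact hzWc hzW
end

section
/- Let (X_s)_{s∈S} be a family of equiconnected spaces (X_s, λ_s) and a ∈ ∏_{s∈S} X_s. Then the small box product ⊡_{s∈S} X_s = σ(a) with the box topology is equiconnected, with equiconnecting map λ(z, w, t) = (λ_s(z_s, w_s, t))_{s∈S}. -/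
open Filter Topology Set

theorem stmt_7 {S : Type*} {X : S → Type*} [∀ s, TopologicalSpace (X s)]
    (lam : ∀ s, X s → X s → unitInterval → X s)
    (hcont : ∀ s, Continuous fun p : X s × X s × unitInterval => lam s p.1 p.2.1 p.2.2)
    (h0 : ∀ s (x y : X s), lam s x y 0 = x)
    (h1 : ∀ s (x y : X s), lam s x y 1 = y)
    (hd : ∀ s (x : X s) (t : unitInterval), lam s x x t = x)
    (a : ∀ s, X s) :
    letI : TopologicalSpace (∀ s, X s) := boxTopology
    ∃ Λ : ↥(smallBox a) × ↥(smallBox a) × unitInterval → ∀ s, X s,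
      (∀ p, Λ p = fun s => lam s (p.1.1 s) (p.2.1.1 s) p.2.2) ∧
      (∀ p, Λ p ∈ smallBox a) ∧
      Continuous Λ ∧
      (∀ z w : ↥(smallBox a), Λ (z, w, 0) = z.1) ∧
      (∀ z w : ↥(smallBox a), Λ (z, w, 1) = w.1) ∧
      (∀ z : ↥(smallBox a), ∀ t, Λ (z, z, t) = z.1) := by
  classical
  letI : TopologicalSpace (∀ s, X s) := boxTopology
  refine ⟨fun p => fun s => lam s (p.1.1 s) (p.2.1.1 s) p.2.2, fun p => rfl, ?_, ?_, ?_, ?_, ?_⟩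
  · -- maps into smallBox
    intro p
    refine (p.1.2.union p.2.1.2).subset ?_
    intro s hs
    by_contra h
    simp only [Set.mem_union, Set.mem_setOf_eq, not_or, not_not] at h
    obtain ⟨hz, hw⟩ := h
    simp only [Set.mem_setOf_eq] at hs
    exact hs (by rw [hz, hw, hd])
  · -- continuity
    apply continuous_generateFrom_iff.mpr
    rintro U ⟨G, hG, rfl⟩
    rw [isOpen_iff_forall_mem_open]
    rintro ⟨z, w, t⟩ hp
    simp only [Set.mem_preimage, Set.mem_univ_pi] at hp
    -- for each s, pick good neighborhoods
    have key : ∀ s, ∃ (U : Set (X s)) (V : Set (X s)) (W : Set unitInterval),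
        IsOpen U ∧ IsOpen V ∧ IsOpen W ∧ z.1 s ∈ U ∧ w.1 s ∈ V ∧ t ∈ W ∧
        (∀ x ∈ U, ∀ y ∈ V, ∀ u ∈ W, lam s x y u ∈ G s) ∧
        (z.1 s = a s → w.1 s = a s → W = Set.univ) := by
      intro s
      have hf : Continuous fun q : (X s × X s) × unitInterval => lam s q.1.1 q.1.2 q.2 := by
        exact (hcont s).comp ((continuous_fst.comp continuous_fst).prodMk
          ((continuous_snd.comp continuous_fst).prodMk continuous_snd))
      by_cases hcase : z.1 s = a s ∧ w.1 s = a s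
      · obtain ⟨hz, hw⟩ := hcase
        have haG : a s ∈ G s := by
          have := hp s
          rwa [hz, hw, hd] at this
        have hsub : ({(a s, a s)} : Set (X s × X s)) ×ˢ (Set.univ : Set unitInterval) ⊆
            (fun q : (X s × X s) × unitInterval => lam s q.1.1 q.1.2 q.2) ⁻¹' G s := by
          rintro ⟨⟨x, y⟩, u⟩ ⟨hxy, -⟩
          simp only [Set.mem_singleton_iff, Prod.mk.injEq] at hxy
          simp only [Set.mem_preimage, hxy.1, hxy.2, hd]
          exact haG
        obtain ⟨V', W', hV', hW', hmem, hWall, hVW⟩ :=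
          generalized_tube_lemma isCompact_singleton isCompact_univ
            ((hG s).preimage hf) hsub
        obtain ⟨Us, Vs, hUs, hVs, hzU, hwV, hUV⟩ :=
          (isOpen_prod_iff.mp hV') (a s) (a s) (hmem rfl)
        refine ⟨Us, Vs, Set.univ, hUs, hVs, isOpen_univ, hz ▸ hzU, hw ▸ hwV,
          Set.mem_univ _, ?_, fun _ _ => rfl⟩
        intro x hx y hy u _
        exact hVW (Set.mk_mem_prod (hUV (Set.mk_mem_prod hx hy)) (hWall (Set.mem_univ u)))
      · have hO : IsOpen ((fun q : (X s × X s) × unitInterval =>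
            lam s q.1.1 q.1.2 q.2) ⁻¹' G s) := (hG s).preimage hf
        have hmem : ((z.1 s, w.1 s), t) ∈ (fun q : (X s × X s) × unitInterval =>
            lam s q.1.1 q.1.2 q.2) ⁻¹' G s := hp s
        obtain ⟨A, W', hA, hW', hmemA, htW, hAW⟩ :=
          (isOpen_prod_iff.mp hO) (z.1 s, w.1 s) t hmem
        obtain ⟨Us, Vs, hUs, hVs, hzU, hwV, hUV⟩ :=
          (isOpen_prod_iff.mp hA) (z.1 s) (w.1 s) hmemA
        refine ⟨Us, Vs, W', hUs, hVs, hW', hzU, hwV, htW, ?_, ?_⟩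
        · intro x hx y hy u hu
          exact hAW (Set.mk_mem_prod (hUV (Set.mk_mem_prod hx hy)) hu)
        · intro hz hw
          exact absurd ⟨hz, hw⟩ hcase
    choose Us Vs Ws hUs hVs hWs hzU hwV htW hgood hWuniv using key
    set F : Set S := {s | z.1 s ≠ a s} ∪ {s | w.1 s ≠ a s} with hF
    have hFfin : F.Finite := z.2.union w.2
    have hWopen : IsOpen (⋂ s ∈ F, Ws s) := hFfin.isOpen_biInter fun s _ => hWs s
    have hboxU : IsOpen (Set.univ.pi Us) :=
      TopologicalSpace.GenerateOpen.basic _ ⟨Us, hUs, rfl⟩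
    have hboxV : IsOpen (Set.univ.pi Vs) :=
      TopologicalSpace.GenerateOpen.basic _ ⟨Vs, hVs, rfl⟩
    refine ⟨(Subtype.val ⁻¹' Set.univ.pi Us) ×ˢ
        ((Subtype.val ⁻¹' Set.univ.pi Vs) ×ˢ (⋂ s ∈ F, Ws s)), ?_, ?_, ?_⟩
    · rintro ⟨z', w', t'⟩ ⟨hz', hw', ht'⟩
      simp only [Set.mem_preimage, Set.mem_univ_pi] at hz' hw' ⊢
      intro s
      have htW' : t' ∈ Ws s := by
        by_cases hsF : s ∈ F
        · exact Set.mem_iInter₂.mp ht' s hsF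
        · have hz0 : z.1 s = a s := by
            by_contra h; exact hsF (Or.inl h)
          have hw0 : w.1 s = a s := by
            by_contra h; exact hsF (Or.inr h)
          rw [hWuniv s hz0 hw0]; exact Set.mem_univ _
      exact hgood s _ (hz' s) _ (hw' s) _ htW'
    · exact (hboxU.preimage continuous_subtype_val).prod
        ((hboxV.preimage continuous_subtype_val).prod hWopen)
    · refine ⟨?_, ?_, ?_⟩
      · simpa [Set.mem_univ_pi] using fun s => hzU s
      · simpa [Set.mem_univ_pi] using fun s => hwV s
      · exact Set.mem_biInter fun s _ => htW s
  · intro z w; funext s; exact h0 s _ _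
  · intro z w; funext s; exact h1 s _ _
  · intro z t; funext s; exact hd s _ _
end

section
/- Let (X_n)_{n≥1} be a sequence of metrizable spaces, a ∈ ∏_{n≥1} X_n, Z = σ(a) the small box product, and Z_n = {z ∈ Z : z_k = a_k for all k > n}. Then (Z_n)_{n≥1} is a sequentially absorbing covering of Z: every convergent sequence in Z (together with its limit) is contained in some Z_k. -/
open Filter Topology Set

theorem stmt_9 {X : ℕ → Type*} [∀ n, TopologicalSpace (X n)]
    [∀ n, TopologicalSpace.MetrizableSpace (X n)] (a : ∀ n, X n) :
    letI : TopologicalSpace (∀ k, X k) := boxTopology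
    ∀ (z : ℕ → ↥(smallBox a)) (l : ↥(smallBox a)),
      Tendsto z atTop (nhds l) →
      ∃ k : ℕ, (∀ n, ∀ j > k, (z n).1 j = a j) ∧ ∀ j > k, l.1 j = a j := by
  intro z l hz
  letI : TopologicalSpace (∀ k, X k) := boxTopology
  by_contra hcon
  push_neg at hcon
  -- bound for l
  obtain ⟨K₀, hK₀⟩ : ∃ K, ∀ j > K, l.1 j = a j := by
    obtain ⟨K, hK⟩ := (l.2.image id).bddAbove
    refine ⟨K, fun j hj => ?_⟩
    by_contra hne
    exact absurd (hK ⟨j, hne, rfl⟩) (not_le.mpr hj)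
  -- bound for each z n
  have hzb : ∀ n, ∃ M, ∀ j > M, (z n).1 j = a j := by
    intro n
    obtain ⟨M, hM⟩ := ((z n).2.image id).bddAbove
    refine ⟨M, fun j hj => ?_⟩
    by_contra hne
    exact absurd (hM ⟨j, hne, rfl⟩) (not_le.mpr hj)
  choose M hM using hzb
  -- claim
  have claim : ∀ N k, ∃ q : ℕ × ℕ, N ≤ q.1 ∧ max k K₀ < q.2 ∧ (z q.1).1 q.2 ≠ a q.2 := by
    intro N k
    set K := max (max k K₀) ((Finset.range N).sup M) with hKdef
    by_cases hb : ∃ n, ∃ j > K, (z n).1 j ≠ a j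
    · obtain ⟨n, j, hj, hne⟩ := hb
      refine ⟨(n, j), ?_, lt_of_le_of_lt (le_max_left _ _) hj, hne⟩
      by_contra hn
      push_neg at hn
      exact hne (hM n j (lt_of_le_of_lt
        (le_trans (Finset.le_sup (Finset.mem_range.mpr hn)) (le_max_right _ _)) hj))
    · push_neg at hb
      obtain ⟨j, hj, hne⟩ := hcon K (fun n j hj => hb n j hj)
      exact absurd (hK₀ j (lt_of_le_of_lt (le_trans (le_max_right k K₀) (le_max_left _ _)) hj)) hne
  choose f hf1 hf2 hf3 using claim
  let p : ℕ → ℕ × ℕ := fun i => Nat.rec (f 0 0) (fun _ q => f (q.1 + 1) q.2) i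
  have hp0 : p 0 = f 0 0 := rfl
  have hps : ∀ i, p (i + 1) = f ((p i).1 + 1) (p i).2 := fun i => rfl
  have hjK : ∀ i, K₀ < (p i).2 := by
    intro i
    cases i with
    | zero => exact lt_of_le_of_lt (le_max_right 0 K₀) (hf2 0 0)
    | succ i => exact lt_of_le_of_lt (le_trans le_rfl (le_max_right _ K₀)) (hf2 _ _)
  have hnz : ∀ i, (z (p i).1).1 (p i).2 ≠ a (p i).2 := by
    intro i
    cases i with
    | zero => exact hf3 0 0
    | succ i => exact hf3 _ _
  have hjlt : ∀ i, (p i).2 < (p (i + 1)).2 := by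
    intro i
    exact lt_of_le_of_lt (le_max_left _ K₀) (hf2 ((p i).1 + 1) (p i).2)
  have jmono : StrictMono (fun i => (p i).2) := strictMono_nat_of_lt_succ hjlt
  have jinj : Function.Injective (fun i => (p i).2) := jmono.injective
  have nge : ∀ i, i ≤ (p i).1 := by
    intro i
    induction i with
    | zero => exact Nat.zero_le _
    | succ i ih => exact le_trans (Nat.succ_le_succ ih) (hf1 ((p i).1 + 1) (p i).2)
  classical
  let G : ∀ j, Set (X j) := fun j =>
    if h : ∃ i, (p i).2 = j then {x | x ≠ (z (p h.choose).1).1 j} else Set.univ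
  have hGopen : ∀ j, IsOpen (G j) := by
    intro j
    simp only [G]
    split
    · exact isOpen_ne
    · exact isOpen_univ
  have key : ∀ i, G ((p i).2) = {x | x ≠ (z (p i).1).1 ((p i).2)} := by
    intro i
    have hex : ∃ i', (p i').2 = (p i).2 := ⟨i, rfl⟩
    simp only [G, dif_pos hex]
    have : hex.choose = i := jinj hex.choose_spec
    rw [this]
  have hU : IsOpen (Set.univ.pi G) :=
    TopologicalSpace.isOpen_generateFrom_of_mem ⟨G, hGopen, rfl⟩
  have hl : (l : ∀ k, X k) ∈ Set.univ.pi G := by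
    intro j _
    simp only [G]
    split
    · rename_i h
      have hji : (p h.choose).2 = j := h.choose_spec
      have hlj : l.1 j = a j := hK₀ j (hji ▸ hjK h.choose)
      have := hnz h.choose
      rw [hji] at this
      simp only [Set.mem_setOf_eq]
      rw [hlj]
      exact fun he => this he.symm
    · trivial
  have znotin : ∀ i, ((z (p i).1 : ∀ k, X k)) ∉ Set.univ.pi G := by
    intro i hmem
    have := hmem (p i).2 (Set.mem_univ _)
    rw [key i] at this
    exact this rfl
  have hUopen' : IsOpen {y : ↥(smallBox a) | (y : ∀ k, X k) ∈ Set.univ.pi G} :=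
    hU.preimage continuous_subtype_val
  have hev := hz (hUopen'.mem_nhds hl)
  rw [mem_map, mem_atTop_sets] at hev
  obtain ⟨N, hN⟩ := hev
  exact znotin N (hN ((p N).1) (nge N))
end

section
/- Let X be a collectionwise normal space, (F_n)_{n∈ω} an increasing sequence of closed subsets of X, A = ⋃_{n∈ω} F_n, and (C_i : i ∈ I) a partition of A into sets that are clopen in A. Then there exists a sequence (𝒰_n)_{n∈ω} of discrete families 𝒰_n = (U_{n,i} : i ∈ I) of functionally open subsets of X such that F_n ∩ C_i ⊆ U_{n,i} for all n ∈ ω and i ∈ I. -/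
open Filter Topology Set

/-- A family of sets is discrete if every point has a neighborhood meeting at most
one member of the family. -/
def DiscreteFamily {X : Type*} [TopologicalSpace X] {ι : Type*} (F : ι → Set X) : Prop :=
  ∀ x : X, ∃ U ∈ nhds x, {i | (U ∩ F i).Nonempty}.Subsingleton

/-- A space is collectionwise normal if every discrete family of closed sets can be
expanded to a discrete family of open sets. -/
def CollectionwiseNormal (X : Type*) [TopologicalSpace X] : Prop :=
  ∀ ⦃ι : Type⦄ (F : ι → Set X), (∀ i, IsClosed (F i)) → DiscreteFamily F →
    ∃ U : ι → Set X, (∀ i, IsOpen (U i)) ∧ (∀ i, F i ⊆ U i) ∧ DiscreteFamily U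

/-- A set is functionally open if it is `f⁻¹((0,1])` for some continuous `f : X → [0,1]`. -/
def FunctionallyOpen {X : Type*} [TopologicalSpace X] (U : Set X) : Prop :=
  ∃ f : X → ℝ, Continuous f ∧ (∀ x, f x ∈ Set.Icc (0:ℝ) 1) ∧ U = f ⁻¹' Set.Ioc (0:ℝ) 1

/-- A set is functionally closed if it is the zero set of a continuous `f : X → [0,1]`. -/
def FunctionallyClosed {X : Type*} [TopologicalSpace X] (U : Set X) : Prop :=
  ∃ f : X → ℝ, Continuous f ∧ (∀ x, f x ∈ Set.Icc (0:ℝ) 1) ∧ U = f ⁻¹' ({0} : Set ℝ)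

lemma cwn_normal {X : Type*} [TopologicalSpace X] (hX : CollectionwiseNormal X) :
    NormalSpace X := by
  constructor
  intro s t hs ht hd
  set G : Bool → Set X := fun b => bif b then s else t with hG
  have hGcl : ∀ b, IsClosed (G b) := by rintro (_|_) <;> simpa [hG]
  have hGdisc : DiscreteFamily G := by
    intro x
    by_cases hx : x ∈ s
    · refine ⟨tᶜ, ht.isOpen_compl.mem_nhds (disjoint_left.1 hd hx), ?_⟩
      have hempty : ¬ (tᶜ ∩ G false).Nonempty := by
        simp [hG]
      rintro (_|_) ha (_|_) hb
      · rfl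
      · exact absurd ha hempty
      · exact absurd hb hempty
      · rfl
    · refine ⟨sᶜ, hs.isOpen_compl.mem_nhds hx, ?_⟩
      have hempty : ¬ (sᶜ ∩ G true).Nonempty := by
        simp [hG]
      rintro (_|_) ha (_|_) hb
      · rfl
      · exact absurd hb hempty
      · exact absurd ha hempty
      · rfl
  obtain ⟨U, hUo, hUsub, hUdisc⟩ := hX G hGcl hGdisc
  refine ⟨U true, U false, hUo _, hUo _, by simpa [hG] using hUsub true,
    by simpa [hG] using hUsub false, ?_⟩
  rw [disjoint_left]
  intro x hxt hxf
  obtain ⟨V, hV, hsub⟩ := hUdisc x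
  have hxV := mem_of_mem_nhds hV
  have : (true : Bool) = false := hsub ⟨x, hxV, hxt⟩ ⟨x, hxV, hxf⟩
  simp at this

theorem stmt_10 {X : Type*} [TopologicalSpace X] (hX : CollectionwiseNormal X)
    (F : ℕ → Set X) (hFcl : ∀ n, IsClosed (F n)) (hFmono : Monotone F)
    {I : Type} (C : I → Set X)
    (hCdisj : Pairwise (Function.onFun Disjoint C))
    (hCunion : (⋃ i, C i) = ⋃ n, F n)
    (hCopen : ∀ i, IsOpen ((Subtype.val ⁻¹' C i) : Set ↥(⋃ n, F n)))
    (hCclosed : ∀ i, IsClosed ((Subtype.val ⁻¹' C i) : Set ↥(⋃ n, F n))) :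
    ∃ U : ℕ → I → Set X, ∀ n,
      DiscreteFamily (U n) ∧ (∀ i, FunctionallyOpen (U n i)) ∧
      ∀ i, F n ∩ C i ⊆ U n i := by
  haveI : NormalSpace X := cwn_normal hX
  have hCA : ∀ i, C i ⊆ ⋃ n, F n := fun i => hCunion ▸ subset_iUnion C i
  -- each F n ∩ C i is closed in X
  have hclosed : ∀ n i, IsClosed (F n ∩ C i) := by
    intro n i
    have hsub : F n ⊆ ⋃ n, F n := subset_iUnion F n
    have h1 : IsClosed ((Subtype.val ⁻¹' C i) : Set ↥(F n)) := by
      have he : ((Subtype.val ⁻¹' C i) : Set ↥(F n)) =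
          (Set.inclusion hsub) ⁻¹' ((Subtype.val ⁻¹' C i) : Set ↥(⋃ n, F n)) := rfl
      rw [he]
      exact (hCclosed i).preimage (continuous_inclusion hsub)
    have h2 := (hFcl n).isClosedEmbedding_subtypeVal.isClosedMap _ h1
    have h3 : (Subtype.val '' ((Subtype.val ⁻¹' C i) : Set ↥(F n))) = F n ∩ C i := by
      rw [Subtype.image_preimage_coe, inter_comm]
    rwa [h3] at h2
  -- the family (F n ∩ C i)_i is discrete
  have hdisc : ∀ n, DiscreteFamily (fun i => F n ∩ C i) := by
    intro n x
    by_cases hx : x ∈ F n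
    · have hxA : x ∈ ⋃ n, F n := subset_iUnion F n hx
      obtain ⟨i, hi⟩ := mem_iUnion.1 (hCunion ▸ hxA : x ∈ ⋃ i, C i)
      obtain ⟨V, hVopen, hVeq⟩ := isOpen_induced_iff.1 (hCopen i)
      have hVA : V ∩ (⋃ n, F n) = C i := by
        have := congrArg (fun s => (Subtype.val '' s : Set X)) hVeq
        simp only [Subtype.image_preimage_coe] at this
        rw [inter_comm, this, inter_eq_right.2 (hCA i)]
      have hidx : ∀ j, (V ∩ (F n ∩ C j)).Nonempty → j = i := by
        rintro j ⟨y, hyV, hyF, hyC⟩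
        have hyA : y ∈ ⋃ n, F n := subset_iUnion F n hyF
        have hyCi : y ∈ C i := hVA ▸ ⟨hyV, hyA⟩
        by_contra hji
        exact (hCdisj hji).le_bot ⟨hyC, hyCi⟩
      have hxV : x ∈ V := (hVA ▸ hi : x ∈ V ∩ (⋃ n, F n)).1
      exact ⟨V, hVopen.mem_nhds hxV, fun j hj k hk => (hidx j hj).trans (hidx k hk).symm⟩
    · refine ⟨(F n)ᶜ, (hFcl n).isOpen_compl.mem_nhds hx, ?_⟩
      rintro j ⟨y, hyV, hyF, -⟩
      exact absurd hyF hyV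
  have key : ∀ n, ∃ W : I → Set X, DiscreteFamily W ∧ (∀ i, FunctionallyOpen (W i)) ∧
      ∀ i, F n ∩ C i ⊆ W i := by
    intro n
    obtain ⟨U, hUo, hUsub, hUdisc⟩ := hX _ (hclosed n) (hdisc n)
    have hW : ∀ i, ∃ W, FunctionallyOpen W ∧ (F n ∩ C i ⊆ W) ∧ W ⊆ U i := by
      intro i
      obtain ⟨f, hf0, hf1, hfIcc⟩ := exists_continuous_zero_one_of_isClosed
        (hUo i).isClosed_compl (hclosed n i)
        (disjoint_compl_left.mono_right (hUsub i))
      refine ⟨f ⁻¹' Set.Ioc (0:ℝ) 1, ⟨f, f.continuous, hfIcc, rfl⟩, ?_, ?_⟩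
      · intro x hx
        have : f x = 1 := hf1 hx
        simp [Set.mem_preimage, this]
      · intro x hx
        by_contra hxU
        have : f x = 0 := hf0 hxU
        simp [Set.mem_preimage, this] at hx
    choose W hWfo hWsub hWU using hW
    refine ⟨W, ?_, hWfo, hWsub⟩
    intro x
    obtain ⟨V, hV, hsub⟩ := hUdisc x
    exact ⟨V, hV, fun j hj k hk =>
      hsub (hj.mono (inter_subset_inter_right _ (hWU j)))
        (hk.mono (inter_subset_inter_right _ (hWU k)))⟩
  choose U hU using key
  exact ⟨U, hU⟩
end

section
/- Let X be a topological space, (Z_s)_{s∈S} a family of metric spaces, a ∈ ∏ Z_s, ⊡ = σ(a) the small box product, and (h_n) a sequence of continuous maps h_n : X → ⊡ converging pointwise (in the box topology) to g : X → ⊡. For m, n ∈ ω let X_{m,n} = {x ∈ X : |{s ∈ S : ∃ i ≥ n, (h_i(x))_s ≠ a_s}| ≤ m}. Then each X_{m,n} is functionally closed in X and X = ⋃_{m,n∈ω} X_{m,n}. -/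
open Filter Topology Set

lemma box_isOpen_pi {S : Type*} {Z : S → Type*} [∀ s, TopologicalSpace (Z s)]
    (G : ∀ s, Set (Z s)) (hG : ∀ s, IsOpen (G s)) :
    IsOpen[boxTopology] (Set.univ.pi G) :=
  TopologicalSpace.GenerateOpen.basic _ ⟨G, hG, rfl⟩

lemma box_continuous_eval {S : Type*} {Z : S → Type*} [∀ s, TopologicalSpace (Z s)] (s : S) :
    @Continuous (∀ t, Z t) (Z s) boxTopology _ (fun f => f s) := by
  classical
  rw [@continuous_def _ _ boxTopology]
  intro V hV
  have hEq : (fun f : ∀ t, Z t => f s) ⁻¹' V =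
      Set.univ.pi (Function.update (fun t => (Set.univ : Set (Z t))) s V) := by
    ext f
    simp only [Set.mem_preimage, Set.mem_pi, Set.mem_univ, forall_true_left]
    constructor
    · intro hf t
      rcases eq_or_ne t s with rfl | ht
      · rwa [Function.update_self]
      · rw [Function.update_of_ne ht]; exact Set.mem_univ _
    · intro hf
      have := hf s
      rwa [Function.update_self] at this
  rw [hEq]
  refine box_isOpen_pi _ (fun t => ?_)
  rcases eq_or_ne t s with rfl | ht
  · rwa [Function.update_self]
  · rw [Function.update_of_ne ht]; exact isOpen_univ

lemma abs_min_one (a b : ℝ) : |min a 1 - min b 1| ≤ |a - b| := by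
  have h1 := le_abs_self (a - b)
  have h2 := neg_abs_le (a - b)
  rcases le_total a 1 with ha | ha <;> rcases le_total b 1 with hb | hb
  · rw [min_eq_left ha, min_eq_left hb]
  · rw [min_eq_left ha, min_eq_right hb, abs_le]; constructor <;> linarith
  · rw [min_eq_right ha, min_eq_left hb, abs_le]; constructor <;> linarith
  · rw [min_eq_right ha, min_eq_right hb, abs_le]; constructor <;> linarith

lemma prod_le_prod_add_card_mul {S : Type*} (T : Finset S) (u v : S → ℝ)
    (hu0 : ∀ s, 0 ≤ u s) (hu1 : ∀ s, u s ≤ 1)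
    (hv0 : ∀ s, 0 ≤ v s) (hv1 : ∀ s, v s ≤ 1)
    {ε : ℝ} (hε : 0 ≤ ε) (hd : ∀ s, v s ≤ u s + ε) :
    ∏ s ∈ T, v s ≤ (∏ s ∈ T, u s) + T.card * ε := by
  classical
  induction T using Finset.induction_on with
  | empty => simp
  | insert s T hs ih =>
    rw [Finset.prod_insert hs, Finset.prod_insert hs, Finset.card_insert_of_notMem hs]
    have hTu0 : 0 ≤ ∏ t ∈ T, u t := Finset.prod_nonneg (fun i _ => hu0 i)
    have hTu1 : ∏ t ∈ T, u t ≤ 1 := Finset.prod_le_one (fun i _ => hu0 i) (fun i _ => hu1 i)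
    have hTv0 : 0 ≤ ∏ t ∈ T, v t := Finset.prod_nonneg (fun i _ => hv0 i)
    have hc : (0:ℝ) ≤ T.card := Nat.cast_nonneg _
    push_cast
    nlinarith [mul_le_mul_of_nonneg_left ih (hv0 s),
      mul_le_mul_of_nonneg_right (hd s) hTu0,
      mul_le_mul_of_nonneg_left hTu1 hε,
      mul_le_mul_of_nonneg_right (hv1 s) (mul_nonneg hc hε), hv0 s, hu0 s]

lemma part1 {X : Type*} [TopologicalSpace X] {S : Type*} {Z : S → Type*}
    [∀ s, MetricSpace (Z s)] (a : ∀ s, Z s) (h : ℕ → X → ∀ s, Z s)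
    (hcont : ∀ n, @Continuous X (∀ s, Z s) _ boxTopology (h n)) (m n : ℕ) :
    FunctionallyClosed
      {x : X | ∃ T : Finset S, T.card ≤ m ∧ ∀ s, (∃ i ≥ n, h i x s ≠ a s) → s ∈ T} := by
  classical
  set w : ℕ → ℝ := fun i => (1/2:ℝ)^i * (1/2) with hw
  have hw_pos : ∀ i, 0 < w i := fun i => by rw [hw]; positivity
  have hw_sum : Summable w :=
    (summable_geometric_of_lt_one (by norm_num) (by norm_num)).mul_right _
  have hw_tsum : ∑' i, w i = 1 := by
    rw [hw, tsum_mul_right, tsum_geometric_of_lt_one (by norm_num) (by norm_num)]; norm_num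
  set φ : ℕ → X → S → ℝ := fun i x s => min (dist (h (n + i) x s) (a s)) 1 with hφ
  have hφ0 : ∀ i x s, 0 ≤ φ i x s := fun i x s => le_min dist_nonneg zero_le_one
  have hφ1 : ∀ i x s, φ i x s ≤ 1 := fun i x s => min_le_right _ _
  have hsumm : ∀ x s, Summable (fun i => w i * φ i x s) := by
    intro x s
    refine Summable.of_nonneg_of_le
      (fun i => mul_nonneg (hw_pos i).le (hφ0 i x s)) (fun i => ?_) hw_sum
    exact mul_le_of_le_one_right (hw_pos i).le (hφ1 i x s)
  set D : X → S → ℝ := fun x s => ∑' i, w i * φ i x s with hD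
  have hD0 : ∀ x s, 0 ≤ D x s := fun x s =>
    tsum_nonneg (fun i => mul_nonneg (hw_pos i).le (hφ0 i x s))
  have hD1 : ∀ x s, D x s ≤ 1 := by
    intro x s
    calc D x s ≤ ∑' i, w i :=
          Summable.tsum_le_tsum (fun i => mul_le_of_le_one_right (hw_pos i).le (hφ1 i x s))
            (hsumm x s) hw_sum
      _ = 1 := hw_tsum
  have hDzero : ∀ x s, D x s = 0 ↔ ∀ i, n ≤ i → h i x s = a s := by
    intro x s
    constructor
    · intro h0 i hi
      have hterm : w (i - n) * φ (i - n) x s ≤ 0 := by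
        rw [show (0:ℝ) = D x s from h0.symm]
        exact Summable.le_tsum (hsumm x s) _ (fun j _ => mul_nonneg (hw_pos j).le (hφ0 j x s))
      have hφz : φ (i - n) x s = 0 := by
        nlinarith [hφ0 (i - n) x s, hw_pos (i - n)]
      have hdist : dist (h (n + (i - n)) x s) (a s) = 0 := by
        rcases min_eq_iff.mp hφz with ⟨h1, _⟩ | ⟨h1, _⟩
        · exact h1
        · norm_num at h1
      have hni : n + (i - n) = i := by omega
      rw [hni] at hdist
      exact dist_eq_zero.mp hdist
    · intro hz
      have hzero : ∀ i : ℕ, w i * φ i x s = 0 := by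
        intro i
        have := hz (n + i) (Nat.le_add_right n i)
        rw [hφ]
        simp [this, dist_self]
      rw [hD]
      simp only [hzero, tsum_zero]
  -- key uniform continuity estimate
  have key : ∀ (x : X) (ε : ℝ), 0 < ε → ∃ U ∈ 𝓝 x, ∀ y ∈ U, ∀ s, |D y s - D x s| ≤ ε := by
    intro x ε hε
    obtain ⟨N, hN⟩ : ∃ N : ℕ, (1/2:ℝ)^N ≤ ε/2 := by
      obtain ⟨N, hN⟩ := exists_pow_lt_of_lt_one (by linarith : (0:ℝ) < ε/2)
        (by norm_num : (1/2:ℝ) < 1)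
      exact ⟨N, hN.le⟩
    set U : Set X := ⋂ i ∈ Finset.range N,
        (h (n + i)) ⁻¹' (Set.univ.pi fun s => Metric.ball (h (n + i) x s) (ε/2)) with hU
    have hUnhds : U ∈ 𝓝 x := by
      rw [hU]
      refine (Filter.biInter_finset_mem _).mpr (fun i _ => ?_)
      refine IsOpen.mem_nhds ?_ ?_
      · exact @IsOpen.preimage X (∀ s, Z s) _ boxTopology _ (hcont (n+i)) _
          (box_isOpen_pi _ fun s => Metric.isOpen_ball)
      · intro s _
        simpa using (by positivity : (0:ℝ) < ε/2)
    refine ⟨U, hUnhds, fun y hy s => ?_⟩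
    have hyi : ∀ i, i < N → dist (h (n+i) y s) (h (n+i) x s) ≤ ε/2 := by
      intro i hi
      rw [hU] at hy
      have h1 := Set.mem_iInter₂.mp hy i (Finset.mem_range.mpr hi)
      have h2 := (Set.mem_preimage.mp h1) s (Set.mem_univ s)
      exact (Metric.mem_ball.mp h2).le
    have hterm : ∀ i, |φ i y s - φ i x s| ≤ if i < N then ε/2 else 1 := by
      intro i
      by_cases hi : i < N
      · simp only [hi, if_true]
        calc |φ i y s - φ i x s|
            ≤ |dist (h (n+i) y s) (a s) - dist (h (n+i) x s) (a s)| := abs_min_one _ _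
          _ ≤ dist (h (n+i) y s) (h (n+i) x s) := abs_dist_sub_le _ _ _
          _ ≤ ε/2 := hyi i hi
      · simp only [hi, if_false]
        have a1 := hφ0 i y s; have a2 := hφ1 i y s
        have a3 := hφ0 i x s; have a4 := hφ1 i x s
        rw [abs_le]; constructor <;> linarith
    have hsabs : Summable (fun i => w i * |φ i y s - φ i x s|) := by
      refine Summable.of_nonneg_of_le (fun i => mul_nonneg (hw_pos i).le (abs_nonneg _))
        (fun i => ?_) hw_sum
      refine mul_le_of_le_one_right (hw_pos i).le ?_
      have a1 := hφ0 i y s; have a2 := hφ1 i y s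
      have a3 := hφ0 i x s; have a4 := hφ1 i x s
      rw [abs_le]; constructor <;> linarith
    have habs : |D y s - D x s| ≤ ∑' i, w i * |φ i y s - φ i x s| := by
      have hsub : D y s - D x s = ∑' i, (w i * φ i y s - w i * φ i x s) :=
        (Summable.tsum_sub (hsumm y s) (hsumm x s)).symm
      rw [hsub]
      have h1 : ∀ i : ℕ, ‖w i * φ i y s - w i * φ i x s‖ = w i * |φ i y s - φ i x s| := by
        intro i
        rw [Real.norm_eq_abs, ← mul_sub, abs_mul, abs_of_nonneg (hw_pos i).le]
      calc |∑' i, (w i * φ i y s - w i * φ i x s)|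
          ≤ ∑' i, ‖w i * φ i y s - w i * φ i x s‖ := by
            rw [← Real.norm_eq_abs]
            exact norm_tsum_le_tsum_norm (by simpa only [h1] using hsabs)
        _ = ∑' i, w i * |φ i y s - φ i x s| := tsum_congr h1
    set B : ℕ → ℝ := fun i => if i < N then w i * (ε/2) else w i with hB
    have hBle : ∀ i, w i * |φ i y s - φ i x s| ≤ B i := by
      intro i
      rw [hB]
      by_cases hi : i < N
      · simp only [hi, if_true]
        have := hterm i
        rw [if_pos hi] at this
        exact mul_le_mul_of_nonneg_left this (hw_pos i).le
      · simp only [hi, if_false]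
        have := hterm i
        rw [if_neg hi] at this
        simpa using mul_le_mul_of_nonneg_left this (hw_pos i).le
    have hBsum : Summable B := by
      refine Summable.of_nonneg_of_le (fun i => ?_) (fun i => ?_)
        (hw_sum.mul_right (ε/2 + 1))
      · simp only [hB]; by_cases hi : i < N
        · simp only [hi, if_true]; positivity
        · simp only [hi, if_false]; exact (hw_pos i).le
      · simp only [hB]; by_cases hi : i < N
        · simp only [hi, if_true]
          have := (hw_pos i).le
          nlinarith
        · simp only [hi, if_false]
          nlinarith [hw_pos i, hε]
    have hBtsum : ∑' i, B i ≤ ε := by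
      rw [← Summable.sum_add_tsum_nat_add N hBsum]
      have e1 : ∑ i ∈ Finset.range N, B i ≤ ε/2 := by
        have hcong : ∀ i ∈ Finset.range N, B i = w i * (ε/2) := by
          intro i hi
          simp only [hB]
          exact if_pos (Finset.mem_range.mp hi)
        rw [Finset.sum_congr rfl hcong, ← Finset.sum_mul]
        have hle : ∑ i ∈ Finset.range N, w i ≤ 1 :=
          hw_tsum ▸ Summable.sum_le_tsum _ (fun i _ => (hw_pos i).le) hw_sum
        have hge : (0:ℝ) ≤ ∑ i ∈ Finset.range N, w i :=
          Finset.sum_nonneg (fun i _ => (hw_pos i).le)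
        nlinarith
      have e2 : ∑' i : ℕ, B (i + N) ≤ ε/2 := by
        have hcong : ∀ i : ℕ, B (i + N) = (1/2:ℝ)^N * w i := by
          intro i
          simp only [hB, hw]
          rw [if_neg (by omega)]
          ring
        rw [tsum_congr hcong, tsum_mul_left, hw_tsum, mul_one]
        exact hN
      linarith
    calc |D y s - D x s| ≤ ∑' i, w i * |φ i y s - φ i x s| := habs
      _ ≤ ∑' i, B i := Summable.tsum_le_tsum hBle hsabs hBsum
      _ ≤ ε := hBtsum
  -- the function f
  set f : X → ℝ := fun x =>
    sSup ((fun T : Finset S => ∏ s ∈ T, D x s) '' {T : Finset S | T.card = m + 1}) with hf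
  have hprod0 : ∀ (x : X) (T : Finset S), 0 ≤ ∏ s ∈ T, D x s :=
    fun x T => Finset.prod_nonneg fun s _ => hD0 x s
  have hprod1 : ∀ (x : X) (T : Finset S), ∏ s ∈ T, D x s ≤ 1 :=
    fun x T => Finset.prod_le_one (fun s _ => hD0 x s) (fun s _ => hD1 x s)
  have hbdd : ∀ x, BddAbove ((fun T : Finset S => ∏ s ∈ T, D x s) '' {T : Finset S | T.card = m + 1}) := by
    intro x
    refine ⟨1, ?_⟩
    rintro r ⟨T, _, rfl⟩
    exact hprod1 x T
  have hf0 : ∀ x, 0 ≤ f x := by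
    intro x
    refine Real.sSup_nonneg ?_
    rintro r ⟨T, _, rfl⟩
    exact hprod0 x T
  have hf1 : ∀ x, f x ≤ 1 := by
    intro x
    refine Real.sSup_le ?_ zero_le_one
    rintro r ⟨T, _, rfl⟩
    exact hprod1 x T
  have hflip : ∀ (x y : X) (ε : ℝ), 0 ≤ ε → (∀ s, |D y s - D x s| ≤ ε) →
      f y ≤ f x + (m+1) * ε := by
    intro x y ε hε hclose
    refine Real.sSup_le ?_ (add_nonneg (hf0 x) (by positivity))
    rintro r ⟨T, hT, rfl⟩
    have hTcard : T.card = m + 1 := hT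
    have h1 : ∏ s ∈ T, D y s ≤ (∏ s ∈ T, D x s) + T.card * ε :=
      prod_le_prod_add_card_mul T (D x) (D y) (fun s => hD0 x s) (fun s => hD1 x s)
        (fun s => hD0 y s) (fun s => hD1 y s) hε
        (fun s => by have := abs_le.mp (hclose s); linarith [this.2])
    have h2 : ∏ s ∈ T, D x s ≤ f x := le_csSup (hbdd x) ⟨T, hT, rfl⟩
    rw [hTcard] at h1
    push_cast at h1 ⊢
    linarith
  have hfc : Continuous f := by
    rw [continuous_iff_continuousAt]
    intro x
    rw [ContinuousAt, Metric.tendsto_nhds]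
    intro ε hε
    have hm1 : (0:ℝ) < (m:ℝ) + 1 := by positivity
    have hε' : 0 < ε / (2 * ((m:ℝ)+1)) := by positivity
    obtain ⟨U, hUn, hUc⟩ := key x _ hε'
    have heq : ((m:ℝ)+1) * (ε / (2 * ((m:ℝ)+1))) = ε/2 := by
      field_simp
    rw [Filter.eventually_iff_exists_mem]
    refine ⟨U, hUn, fun y hy => ?_⟩
    have h1 := hflip x y _ hε'.le (hUc y hy)
    have h2 := hflip y x _ hε'.le (fun s => by rw [abs_sub_comm]; exact hUc y hy s)
    rw [Real.dist_eq, abs_lt]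
    push_cast at h1 h2
    constructor <;> nlinarith
  refine ⟨f, hfc, fun x => ⟨hf0 x, hf1 x⟩, ?_⟩
  ext x
  simp only [Set.mem_setOf_eq, Set.mem_preimage, Set.mem_singleton_iff]
  constructor
  · rintro ⟨T, hTm, hTcov⟩
    refine le_antisymm (Real.sSup_le ?_ le_rfl) (hf0 x)
    rintro r ⟨T', hT', rfl⟩
    have hT'card : T'.card = m + 1 := hT'
    have hnsub : ¬ (T' ⊆ T) := by
      intro hsub
      have := Finset.card_le_card hsub
      omega
    obtain ⟨s, hsT', hsT⟩ := Finset.not_subset.mp hnsub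
    have hsA : ∀ i, n ≤ i → h i x s = a s := by
      intro i hi
      by_contra hne
      exact hsT (hTcov s ⟨i, hi, hne⟩)
    have hDz : D x s = 0 := (hDzero x s).mpr hsA
    exact (Finset.prod_eq_zero hsT' hDz).le
  · intro hfx
    by_contra hno
    push_neg at hno
    have hT' : ∃ T' : Finset S, (↑T' : Set S) ⊆ {s | ∃ i ≥ n, h i x s ≠ a s} ∧
        T'.card = m + 1 := by
      rcases Set.finite_or_infinite {s | ∃ i ≥ n, h i x s ≠ a s} with hfin | hinf
      · have hcard : m + 1 ≤ hfin.toFinset.card := by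
          by_contra hc
          push_neg at hc
          obtain ⟨s, hs1, hs2⟩ := hno hfin.toFinset (by omega)
          exact hs2 (hfin.mem_toFinset.mpr hs1)
        obtain ⟨T', hsub, hcard'⟩ := Finset.exists_subset_card_eq hcard
        exact ⟨T', fun s hs => hfin.mem_toFinset.mp (hsub hs), hcard'⟩
      · obtain ⟨T', hsub, hcard⟩ := hinf.exists_subset_card_eq (m+1)
        exact ⟨T', hsub, hcard⟩
    obtain ⟨T', hsub, hcard⟩ := hT'
    have hpos : 0 < ∏ s ∈ T', D x s := by
      refine Finset.prod_pos (fun s hs => ?_)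
      obtain ⟨i, hi, hne⟩ := hsub (Finset.mem_coe.mpr hs)
      have hDne : D x s ≠ 0 := fun h0 => hne ((hDzero x s).mp h0 i hi)
      exact lt_of_le_of_ne (hD0 x s) (Ne.symm hDne)
    have hle : ∏ s ∈ T', D x s ≤ f x := le_csSup (hbdd x) ⟨T', hcard, rfl⟩
    rw [hfx] at hle
    linarith

lemma part2 {X : Type*} [TopologicalSpace X] {S : Type*} {Z : S → Type*}
    [∀ s, MetricSpace (Z s)] (a : ∀ s, Z s) (h : ℕ → X → ∀ s, Z s) (g : X → ∀ s, Z s)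
    (hgmem : ∀ x, g x ∈ smallBox a)
    (hlim : ∀ x, Tendsto (fun n => h n x) atTop (@nhds (∀ s, Z s) boxTopology (g x))) :
    (⋃ m : ℕ, ⋃ n : ℕ,
      {x : X | ∃ T : Finset S, T.card ≤ m ∧ ∀ s, (∃ i ≥ n, h i x s ≠ a s) → s ∈ T})
      = Set.univ := by
  classical
  ext x
  simp only [Set.mem_iUnion, Set.mem_univ, iff_true, Set.mem_setOf_eq]
  by_contra hno
  push_neg at hno
  have hstep : ∀ (T : Finset S) (b : ℕ),
      ∃ p : S × ℕ, p.1 ∉ T ∧ b ≤ p.2 ∧ h p.2 x p.1 ≠ a p.1 := by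
    intro T b
    obtain ⟨s, ⟨i, hi, hne⟩, hsT⟩ := hno T.card b T le_rfl
    exact ⟨(s, i), hsT, hi, hne⟩
  let F : Finset S → ℕ → S × ℕ := fun T b => Classical.choose (hstep T b)
  have hF : ∀ T b, (F T b).1 ∉ T ∧ b ≤ (F T b).2 ∧ h (F T b).2 x (F T b).1 ≠ a (F T b).1 :=
    fun T b => Classical.choose_spec (hstep T b)
  have hgfin : {s | g x s ≠ a s}.Finite := hgmem x
  let W : Finset S := hgfin.toFinset
  let st : ℕ → Finset S × ℕ := fun k => Nat.rec (motive := fun _ => Finset S × ℕ) (W, 0)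
    (fun _ prev => (insert (F prev.1 prev.2).1 prev.1, (F prev.1 prev.2).2 + 1)) k
  let sq : ℕ → S := fun k => (F (st k).1 (st k).2).1
  let iq : ℕ → ℕ := fun k => (F (st k).1 (st k).2).2
  have hst_succ : ∀ k, st (k+1) = (insert (sq k) (st k).1, iq k + 1) := fun k => rfl
  have hsnotmem : ∀ k, sq k ∉ (st k).1 := fun k => (hF (st k).1 (st k).2).1
  have hblevel : ∀ k, (st k).2 ≤ iq k := fun k => (hF (st k).1 (st k).2).2.1
  have hne : ∀ k, h (iq k) x (sq k) ≠ a (sq k) := fun k => (hF (st k).1 (st k).2).2.2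
  have hmono1 : Monotone (fun k => (st k).1) := by
    apply monotone_nat_of_le_succ
    intro k
    rw [hst_succ k]
    exact Finset.subset_insert _ _
  have hmono2 : Monotone (fun k => (st k).2) := by
    apply monotone_nat_of_le_succ
    intro k
    rw [hst_succ k]
    exact (hblevel k).trans (Nat.le_succ _)
  have hiq_mono : StrictMono iq := by
    intro j k hjk
    have h1 : iq j < (st (j+1)).2 := by rw [hst_succ j]; exact Nat.lt_succ_self _
    exact h1.trans_le ((hmono2 hjk).trans (hblevel k))
  have hsq_mem : ∀ j k, j < k → sq j ∈ (st k).1 := by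
    intro j k hjk
    have h1 : sq j ∈ (st (j+1)).1 := by rw [hst_succ j]; exact Finset.mem_insert_self _ _
    exact hmono1 hjk h1
  have hsq_inj : Function.Injective sq := by
    intro j k hjksq
    by_contra hjk
    rcases Nat.lt_or_ge j k with hlt | hge
    · exact hsnotmem k (hjksq ▸ hsq_mem j k hlt)
    · have hlt : k < j := by omega
      exact hsnotmem j (hjksq ▸ hsq_mem k j hlt)
  have hsq_notW : ∀ k, g x (sq k) = a (sq k) := by
    intro k
    by_contra hgs
    have hmem : sq k ∈ W := hgfin.mem_toFinset.mpr hgs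
    have hWsub : W ⊆ (st k).1 := by
      have : (st 0).1 = W := rfl
      exact this ▸ hmono1 (Nat.zero_le k)
    exact hsnotmem k (hWsub hmem)
  -- construct the open box
  set G : ∀ s, Set (Z s) := fun s => {z | ∀ k, sq k = s → z ≠ h (iq k) x s} with hG
  have hGopen : ∀ s, IsOpen (G s) := by
    intro s
    by_cases hex : ∃ k, sq k = s
    · obtain ⟨k₀, hk₀⟩ := hex
      have : G s = {z | z ≠ h (iq k₀) x s} := by
        ext z
        simp only [hG, Set.mem_setOf_eq]
        constructor
        · intro hz
          exact hz k₀ hk₀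
        · intro hz k hk
          have hkk : k = k₀ := hsq_inj (hk.trans hk₀.symm)
          rw [hkk]
          exact hz
      rw [this]
      exact isOpen_ne
    · have : G s = Set.univ := by
        ext z
        simp only [hG, Set.mem_setOf_eq, Set.mem_univ, iff_true]
        intro k hk
        exact absurd ⟨k, hk⟩ hex
      rw [this]
      exact isOpen_univ
  have hgmemG : g x ∈ Set.univ.pi G := by
    intro s _
    simp only [hG, Set.mem_setOf_eq]
    rintro k rfl
    rw [hsq_notW k]
    exact (hne k).symm
  have hnhds : Set.univ.pi G ∈ @nhds (∀ s, Z s) boxTopology (g x) :=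
    @IsOpen.mem_nhds (∀ s, Z s) boxTopology (g x) (Set.univ.pi G) (box_isOpen_pi G hGopen) hgmemG
  have hev := (hlim x) hnhds
  rw [Filter.mem_map, Filter.mem_atTop_sets] at hev
  obtain ⟨n₀, hn₀⟩ := hev
  have hin : h (iq n₀) x ∈ Set.univ.pi G := hn₀ (iq n₀) (hiq_mono.le_apply)
  have := hin (sq n₀) (Set.mem_univ _) n₀ rfl
  exact this rfl

theorem stmt_12 {X : Type*} [TopologicalSpace X] {S : Type*} {Z : S → Type*}
    [∀ s, MetricSpace (Z s)] (a : ∀ s, Z s)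
    (h : ℕ → X → ∀ s, Z s) (g : X → ∀ s, Z s)
    (hmem : ∀ n x, h n x ∈ smallBox a) (hgmem : ∀ x, g x ∈ smallBox a)
    (hcont : ∀ n, @Continuous X (∀ s, Z s) _ boxTopology (h n))
    (hlim : ∀ x, Tendsto (fun n => h n x) atTop (@nhds (∀ s, Z s) boxTopology (g x))) :
    (∀ m n : ℕ, FunctionallyClosed
      {x : X | ∃ T : Finset S, T.card ≤ m ∧ ∀ s, (∃ i ≥ n, h i x s ≠ a s) → s ∈ T}) ∧
    (⋃ m : ℕ, ⋃ n : ℕ,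
      {x : X | ∃ T : Finset S, T.card ≤ m ∧ ∀ s, (∃ i ≥ n, h i x s ≠ a s) → s ∈ T})
      = Set.univ := by
  exact ⟨fun m n => part1 a h hcont m n, part2 a h g hgmem hlim⟩
end

section
/- Let X be a nonempty connected paracompact space, (Z_s)_{s∈S} a family of metrizable spaces, and (g_n) a sequence of continuous maps g_n : X → □_{s∈S} Z_s converging pointwise to g : X → □_{s∈S} Z_s, where each g_n(X) ⊆ σ(a_n) for some a_n. Then there exists a ∈ ∏ Z_s with g(X) ⊆ σ(a); that is, every Baire-one map from a connected paracompact space into a box product whose approximating continuous maps have connected images takes values in a single small box product. -/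
open Filter Topology Set

theorem small_box_eventually {S : Type*} {Z : S → Type*} [∀ s, TopologicalSpace (Z s)]
    [∀ s, T1Space (Z s)] :
    letI : TopologicalSpace (∀ s, Z s) := boxTopology
    ∀ (y : ℕ → ∀ s, Z s) (y₀ : ∀ s, Z s),
      Tendsto y atTop (nhds y₀) → ∀ᶠ n in atTop, y n ∈ smallBox y₀ := by
  letI : TopologicalSpace (∀ s, Z s) := boxTopology
  intro y y₀ hy
  by_contra h
  rw [Filter.not_eventually] at h
  obtain ⟨φ, hφ, hbad⟩ := Filter.extraction_of_frequently_atTop h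
  have hB : ∀ k, {s | y (φ k) s ≠ y₀ s}.Infinite := fun k => hbad k
  classical
  have hex : ∀ fs : Finset (ℕ × S), (∀ p ∈ fs, p.2 ∈ {s | y (φ p.1) s ≠ y₀ s}) →
      ∃ q : ℕ × S, q.2 ∈ {s | y (φ q.1) s ≠ y₀ s} ∧
        ∀ p ∈ fs, p.1 < q.1 ∧ p.2 ≠ q.2 := by
    intro fs _
    set k : ℕ := (fs.sup fun p => p.1) + 1 with hk
    obtain ⟨s', hs'⟩ := ((hB k).diff (fs.image Prod.snd).finite_toSet).nonempty
    obtain ⟨hs'B, hs'notin⟩ := hs'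
    refine ⟨(k, s'), hs'B, fun p hp => ⟨?_, ?_⟩⟩
    · exact Nat.lt_succ_of_le (Finset.le_sup (f := fun p => p.1) hp)
    · intro he
      apply hs'notin
      have : p.2 ∈ fs.image Prod.snd := Finset.mem_image_of_mem Prod.snd hp
      rw [he] at this
      exact Finset.mem_coe.2 this
  obtain ⟨f, hfP, hfr⟩ := exists_seq_of_forall_finset_exists
    (fun p : ℕ × S => p.2 ∈ {s | y (φ p.1) s ≠ y₀ s})
    (fun p q => p.1 < q.1 ∧ p.2 ≠ q.2) hex
  set t : ℕ → S := fun n => (f n).2 with ht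
  set ψ : ℕ → ℕ := fun n => φ (f n).1 with hψ
  have hne : ∀ n, y (ψ n) (t n) ≠ y₀ (t n) := fun n => hfP n
  have htinj : Function.Injective t := by
    intro m n hmn
    rcases lt_trichotomy m n with hlt | heq | hgt
    · exact absurd hmn (hfr m n hlt).2
    · exact heq
    · exact absurd hmn.symm (hfr n m hgt).2
  set G : ∀ s, Set (Z s) := fun s =>
    if h : ∃ n, t n = s then {y (ψ h.choose) s}ᶜ else Set.univ with hG
  have hGopen : ∀ s, IsOpen (G s) := by
    intro s
    rw [hG]
    dsimp only
    split
    · exact isOpen_compl_singleton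
    · exact isOpen_univ
  have hUopen : IsOpen (Set.univ.pi G) :=
    TopologicalSpace.GenerateOpen.basic _ ⟨G, hGopen, rfl⟩
  have hmem : y₀ ∈ Set.univ.pi G := by
    intro s _
    rw [hG]
    dsimp only
    split
    · rename_i h'
      have hcs := h'.choose_spec
      have h2 := hne h'.choose
      rw [hcs] at h2
      exact h2.symm
    · trivial
  have hev : ∀ᶠ n in atTop, y n ∈ Set.univ.pi G :=
    hy.eventually (hUopen.eventually_mem hmem)
  obtain ⟨N, hN⟩ := Filter.eventually_atTop.1 hev
  have hψmono : StrictMono ψ := fun m n hmn => hφ (hfr m n hmn).1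
  have hm := hN (ψ N) hψmono.le_apply
  have hmem2 := hm (t N) (Set.mem_univ _)
  have hGeq : G (t N) = {y (ψ N) (t N)}ᶜ := by
    have h' : ∃ n, t n = t N := ⟨N, rfl⟩
    rw [hG]
    dsimp only
    rw [dif_pos h', htinj h'.choose_spec]
  rw [hGeq] at hmem2
  exact hmem2 rfl

theorem stmt_15 {X : Type*} [TopologicalSpace X] [ParacompactSpace X]
    [ConnectedSpace X] [Nonempty X] {S : Type*} {Z : S → Type*}
    [∀ s, TopologicalSpace (Z s)] [∀ s, TopologicalSpace.MetrizableSpace (Z s)] :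
    letI : TopologicalSpace (∀ s, Z s) := boxTopology
    ∀ (g : X → ∀ s, Z s) (gseq : ℕ → X → ∀ s, Z s),
      (∀ n, Continuous (gseq n)) →
      (∀ n, ∃ an : ∀ s, Z s, ∀ x, gseq n x ∈ smallBox an) →
      (∀ x, Tendsto (fun n => gseq n x) atTop (nhds (g x))) →
      ∃ a : ∀ s, Z s, ∀ x, g x ∈ smallBox a := by
  letI : TopologicalSpace (∀ s, Z s) := boxTopology
  intro g gseq hcont hsb htend
  haveI hT1 : ∀ s, T1Space (Z s) := fun s => inferInstance
  obtain ⟨x₀⟩ := ‹Nonempty X›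
  refine ⟨g x₀, fun x => ?_⟩
  have h1 := small_box_eventually (fun n => gseq n x₀) (g x₀) (htend x₀)
  have h2 := small_box_eventually (fun n => gseq n x) (g x) (htend x)
  obtain ⟨n, hn1, hn2⟩ := (h1.and h2).exists
  obtain ⟨an, han⟩ := hsb n
  have hA1 : {s | gseq n x s ≠ g x s}.Finite := hn2
  have hA2 : {s | gseq n x s ≠ an s}.Finite := han x
  have hA3 : {s | gseq n x₀ s ≠ an s}.Finite := han x₀
  have hA4 : {s | gseq n x₀ s ≠ g x₀ s}.Finite := hn1
  have hsub : {s | g x s ≠ g x₀ s} ⊆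
      {s | gseq n x s ≠ g x s} ∪ {s | gseq n x s ≠ an s} ∪ {s | gseq n x₀ s ≠ an s} ∪
        {s | gseq n x₀ s ≠ g x₀ s} := by
    intro s hs
    by_contra hc
    simp only [Set.mem_union, Set.mem_setOf_eq, not_or, not_not] at hc
    obtain ⟨⟨⟨e1, e2⟩, e3⟩, e4⟩ := hc
    exact hs (by rw [← e1, e2, ← e3, e4])
  exact Set.Finite.subset (((hA1.union hA2).union hA3).union hA4) hsub
end

section
/- Let X be a Lindelöf space, (Z_s)_{s∈S} a family of T₁ spaces, a ∈ ∏ Z_s, and (g_α)_{α∈A} a countable family of continuous maps g_α : X → ⊡_{s∈S} Z_s into the small box product σ(a), where X is first countable. Then there exists a countable set S₀ ⊆ S such that (g_α(x))_s = a_s for every α ∈ A, every x ∈ X, and every s ∈ S ∖ S₀. -/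
open Filter Topology Set

/-- A continuous map from a first countable space into a box product of T₁ spaces
agrees, on some neighborhood of each point, with its value at that point outside a
finite set of coordinates. -/
lemma boxTopology.local_finite_support {X : Type*} [TopologicalSpace X]
    [FirstCountableTopology X] {S : Type*} {Z : S → Type*}
    [∀ s, TopologicalSpace (Z s)] [∀ s, T1Space (Z s)]
    (f : X → ∀ s, Z s) (hf : @Continuous X (∀ s, Z s) _ boxTopology f) (x : X) :
    ∃ F : Finset S, ∃ N ∈ 𝓝 x, ∀ y ∈ N, ∀ s, s ∉ F → f y s = f x s := by
  classical
  letI : TopologicalSpace (∀ s, Z s) := boxTopology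
  by_contra hcon
  push_neg at hcon
  obtain ⟨b, hb⟩ := (𝓝 x).exists_antitone_basis
  have h : ∀ (F : Finset S) (n : ℕ), ∃ y ∈ b n, ∃ s, s ∉ F ∧ f y s ≠ f x s :=
    fun F n => hcon F (b n) (hb.mem n)
  choose y hy s hs hne using h
  set F : ℕ → Finset S := fun n => Nat.rec ∅ (fun k Fk => insert (s Fk k) Fk) n with hF
  have hFsucc : ∀ n, F (n + 1) = insert (s (F n) n) (F n) := fun n => rfl
  set xs : ℕ → X := fun n => y (F n) n with hxs
  set ss : ℕ → S := fun n => s (F n) n with hss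
  have hnew : ∀ n, ss n ∉ F n := fun n => hs (F n) n
  have hmono : Monotone F := by
    apply monotone_nat_of_le_succ
    intro n
    rw [hFsucc]
    exact Finset.subset_insert _ _
  have hmem : ∀ k n, k < n → ss k ∈ F n := by
    intro k n hk
    have h1 : ss k ∈ F (k + 1) := by rw [hFsucc]; exact Finset.mem_insert_self _ _
    exact hmono hk h1
  have hinj : Function.Injective ss := by
    intro i j hij
    by_contra hij'
    rcases Nat.lt_or_ge i j with h' | h'
    · exact hnew j (hij ▸ hmem i j h')
    · exact hnew i (hij ▸ hmem j i (lt_of_le_of_ne h' (Ne.symm hij')))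
  classical
  set G : ∀ t : S, Set (Z t) :=
    fun t => if h : ∃ k, ss k = t then {z | z ≠ f (xs h.choose) t} else Set.univ with hG
  have hGopen : ∀ t, IsOpen (G t) := by
    intro t
    rw [hG]
    by_cases h : ∃ k, ss k = t
    · simp only [dif_pos h]
      exact isOpen_compl_singleton
    · simp only [dif_neg h]
      exact isOpen_univ
  have hGmem : f x ∈ Set.univ.pi G := by
    intro t _
    rw [hG]
    by_cases h : ∃ k, ss k = t
    · simp only [dif_pos h]
      have hk := h.choose_spec
      have key : ∀ u, ss h.choose = u → f x u ≠ f (xs h.choose) u := by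
        intro u huk
        cases huk
        exact fun he => hne (F h.choose) h.choose he.symm
      exact key t hk
    · simp only [dif_neg h]
      trivial
  have hnotin : ∀ n, f (xs n) ∉ Set.univ.pi G := by
    intro n hmem'
    have h : ∃ k, ss k = ss n := ⟨n, rfl⟩
    have hchoose : h.choose = n := hinj h.choose_spec
    have := hmem' (ss n) (Set.mem_univ _)
    rw [hG] at this
    simp only [dif_pos h, hchoose] at this
    exact this rfl
  have hbox_open : IsOpen (Set.univ.pi G) :=
    TopologicalSpace.GenerateOpen.basic _ ⟨G, hGopen, rfl⟩
  have htend : Tendsto xs atTop (𝓝 x) := hb.tendsto fun n => hy (F n) n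
  have htend2 : Tendsto (fun n => f (xs n)) atTop (𝓝 (f x)) :=
    (hf.tendsto x).comp htend
  have := htend2.eventually (hbox_open.mem_nhds hGmem)
  obtain ⟨n, hn⟩ := this.exists
  exact hnotin n hn

theorem stmt_17 {X : Type*} [TopologicalSpace X] [LindelofSpace X]
    [FirstCountableTopology X] {S : Type*} {Z : S → Type*}
    [∀ s, TopologicalSpace (Z s)] [∀ s, T1Space (Z s)] (a : ∀ s, Z s)
    {A : Type*} [Countable A] (g : A → X → ∀ s, Z s)
    (hmem : ∀ α x, g α x ∈ smallBox a)
    (hcont : ∀ α, @Continuous X (∀ s, Z s) _ boxTopology (g α)) :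
    ∃ S₀ : Set S, S₀.Countable ∧ ∀ (α : A) (x : X), ∀ s ∉ S₀, g α x s = a s := by
  have key : ∀ α x, ∃ F : Finset S, ∃ N ∈ 𝓝 x, ∀ y ∈ N, ∀ s, s ∉ F → g α y s = g α x s :=
    fun α x => boxTopology.local_finite_support (g α) (hcont α) x
  choose F N hN hloc using key
  have hsub : ∀ α, ∃ t : Set X, t.Countable ∧ ⋃ x ∈ t, N α x = univ :=
    fun α => LindelofSpace.elim_nhds_subcover (N α) (hN α)
  choose t ht htcov using hsub
  refine ⟨⋃ α, ⋃ x ∈ t α, (↑(F α x) ∪ {s | g α x s ≠ a s}), ?_, ?_⟩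
  · exact Set.countable_iUnion fun α =>
      Set.Countable.biUnion (ht α) fun x _ =>
        ((F α x).finite_toSet.countable).union (hmem α x).countable
  · intro α x s hs
    have hx : x ∈ ⋃ x₀ ∈ t α, N α x₀ := (htcov α) ▸ Set.mem_univ x
    obtain ⟨x₀, hx₀, hxN⟩ := Set.mem_iUnion₂.mp hx
    have hs' : s ∉ (↑(F α x₀) ∪ {s | g α x₀ s ≠ a s} : Set S) := by
      intro h
      exact hs (Set.mem_iUnion.mpr ⟨α, Set.mem_iUnion₂.mpr ⟨x₀, hx₀, h⟩⟩)
    have h1 : s ∉ F α x₀ := fun h => hs' (Or.inl h)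
    have h2 : g α x₀ s = a s := by
      by_contra h
      exact hs' (Or.inr h)
    rw [hloc α x₀ x hxN s h1, h2]
end

section
/- Let X be a topological space, Z a Hausdorff space, (Z₁, λ) an equiconnected subspace of Z, g : X → Z, and let (G_n)_{n≥0}, (F_n)_{n≥0} be sequences of subsets of X², (φ_n)_{n≥1} separately continuous functions X² → [0,1], and (g_n)_{n≥1} continuous maps X → Z₁, satisfying: (1) G₀ = F₀ = X², and the diagonal Δ ⊆ G_{n+1} ⊆ F_n ⊆ G_n, with G_n open and F_n closed; (2) X²∖G_n ⊆ φ_n⁻¹(0) and F_n ⊆ φ_n⁻¹(1); (3) for every x ∈ X, every sequence (x_n) with (x_n, x) ∈ F_{n-1} for all n, and every sequence (t_n) in [0,1], one has λ(g_n(x_n), g_{n+1}(x_n), t_n) → g(x). Then the map f : X² → Z defined by f(x,y) = λ(g_n(x), g_{n+1}(x), φ_n(x,y)) for (x,y) ∈ F_{n-1}∖F_n, and f(x,y) = g(x) for (x,y) ∈ ⋂_n G_n, is well-defined and separately continuous, with diagonal g. -/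
open Filter Topology Set

open Classical in
noncomputable def idxF {X : Type*} (F : ℕ → Set (X × X)) (p : X × X) : ℕ :=
  if h : ∃ n, p ∉ F n then Nat.find h else 0

open Classical in
noncomputable def fAux {X Z : Type*} (lam : Z → Z → unitInterval → Z) (g : X → Z)
    (F : ℕ → Set (X × X)) (φ : ℕ → X × X → unitInterval) (gs : ℕ → X → Z)
    (p : X × X) : Z :=
  if ∀ n, p ∈ F n then g p.1
  else lam (gs (idxF F p) p.1) (gs (idxF F p + 1) p.1) (φ (idxF F p) p)

theorem stmt_18 {X : Type*} [TopologicalSpace X] {Z : Type*} [TopologicalSpace Z]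
    [T2Space Z] (Z₁ : Set Z) (lam : Z → Z → unitInterval → Z)
    (hmem : ∀ z ∈ Z₁, ∀ w ∈ Z₁, ∀ t, lam z w t ∈ Z₁)
    (hlamc : Continuous fun p : ↥Z₁ × ↥Z₁ × unitInterval => lam p.1 p.2.1 p.2.2)
    (hl0 : ∀ z ∈ Z₁, ∀ w ∈ Z₁, lam z w 0 = z)
    (hl1 : ∀ z ∈ Z₁, ∀ w ∈ Z₁, lam z w 1 = w)
    (hld : ∀ z ∈ Z₁, ∀ t, lam z z t = z)
    (g : X → Z) (G F : ℕ → Set (X × X)) (φ : ℕ → X × X → unitInterval)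
    (gs : ℕ → X → Z)
    (hG0 : G 0 = Set.univ) (hF0 : F 0 = Set.univ)
    (hGopen : ∀ n, IsOpen (G n)) (hFclosed : ∀ n, IsClosed (F n))
    (hdiag : ∀ n, Set.diagonal X ⊆ G (n + 1))
    (hGF : ∀ n, G (n + 1) ⊆ F n) (hFG : ∀ n, F n ⊆ G n)
    (hφ0 : ∀ n ≥ 1, ∀ p ∉ G n, φ n p = 0)
    (hφ1 : ∀ n ≥ 1, ∀ p ∈ F n, φ n p = 1)
    (hφsep : ∀ n ≥ 1, (∀ x, Continuous fun y => φ n (x, y)) ∧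
      ∀ y, Continuous fun x => φ n (x, y))
    (hgsmem : ∀ n ≥ 1, ∀ x, gs n x ∈ Z₁)
    (hgscont : ∀ n ≥ 1, Continuous (gs n))
    (hlim : ∀ (x : X) (xs : ℕ → X), (∀ n ≥ 1, (xs n, x) ∈ F (n - 1)) →
      ∀ t : ℕ → unitInterval,
        Tendsto (fun n => lam (gs n (xs n)) (gs (n + 1) (xs n)) (t n)) atTop
          (nhds (g x))) :
    ∃ f : X × X → Z,
      (∀ n ≥ 1, ∀ p ∈ F (n - 1) \ F n,
        f p = lam (gs n p.1) (gs (n + 1) p.1) (φ n p)) ∧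
      (∀ p ∈ ⋂ n, G n, f p = g p.1) ∧
      (∀ x, Continuous fun y => f (x, y)) ∧
      (∀ y, Continuous fun x => f (x, y)) ∧
      (∀ x, f (x, x) = g x) := by
  classical
  -- monotonicity of F
  have hFmono : ∀ {m n : ℕ}, m ≤ n → F n ⊆ F m := by
    intro m n h
    induction h with
    | refl => exact subset_rfl
    | step h ih =>
        exact Set.Subset.trans (Set.Subset.trans (hFG _) (hGF _)) ih
  have hdiagF : ∀ k, Set.diagonal X ⊆ F k := fun k =>
    Set.Subset.trans (hdiag k) (hGF k)
  have hdxx : ∀ k (x : X), (x, x) ∈ F k := fun k x => hdiagF k rfl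
  -- basic facts about idxF
  have hidx : ∀ p : X × X, (¬ ∀ n, p ∈ F n) →
      1 ≤ idxF F p ∧ p ∈ F (idxF F p - 1) ∧ p ∉ F (idxF F p) := by
    intro p hp
    have h : ∃ n, p ∉ F n := by push_neg at hp; exact hp
    have hdef : idxF F p = Nat.find h := by
      simp only [idxF, h, dif_pos]
    have hspec : p ∉ F (Nat.find h) := Nat.find_spec h
    have hpos : 1 ≤ Nat.find h := by
      rcases Nat.eq_zero_or_pos (Nat.find h) with h0 | h1
      · exfalso; apply hspec; rw [h0, hF0]; exact Set.mem_univ p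
      · exact h1
    have hmem1 : p ∈ F (Nat.find h - 1) := by
      by_contra hc
      exact absurd hc (Nat.find_min h (by omega))
    rw [hdef]
    exact ⟨hpos, hmem1, hspec⟩
  have hidx_eq : ∀ (p : X × X) (n : ℕ), 1 ≤ n → p ∈ F (n - 1) → p ∉ F n →
      idxF F p = n := by
    intro p n hn hp1 hp2
    have h : ∃ m, p ∉ F m := ⟨n, hp2⟩
    have hdef : idxF F p = Nat.find h := by
      simp only [idxF, h, dif_pos]
    rw [hdef]
    refine le_antisymm (Nat.find_le hp2) ?_
    by_contra hc
    push_neg at hc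
    have hle : Nat.find h ≤ n - 1 := by omega
    exact Nat.find_spec h (hFmono hle hp1)
  have hidx_ge : ∀ (p : X × X) (N : ℕ), (¬ ∀ n, p ∈ F n) → p ∈ G (N + 1) →
      N + 1 ≤ idxF F p := by
    intro p N hp hmemG
    obtain ⟨h1, h2, h3⟩ := hidx p hp
    by_contra hc
    push_neg at hc
    have hle : idxF F p ≤ N := by omega
    exact h3 (hFmono hle (hGF N hmemG))
  -- formulas for fAux
  set f : X × X → Z := fAux lam g F φ gs with hfdef
  have hfS : ∀ p : X × X, (∀ n, p ∈ F n) → f p = g p.1 := by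
    intro p hp
    simp only [hfdef, fAux, if_pos hp]
  have hfns : ∀ p : X × X, (¬ ∀ n, p ∈ F n) →
      f p = lam (gs (idxF F p) p.1) (gs (idxF F p + 1) p.1) (φ (idxF F p) p) := by
    intro p hp
    simp only [hfdef, fAux, if_neg hp]
  have hfval : ∀ (p : X × X) (n : ℕ), 1 ≤ n → p ∈ F (n - 1) → p ∉ F n →
      f p = lam (gs n p.1) (gs (n + 1) p.1) (φ n p) := by
    intro p n hn hp1 hp2
    have hns : ¬ ∀ m, p ∈ F m := fun h => hp2 (h n)
    rw [hfns p hns, hidx_eq p n hn hp1 hp2]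
  -- continuity helper
  have lamcont : ∀ (a b : X → Z) (τ : X → unitInterval), Continuous a →
      Continuous b → (∀ u, a u ∈ Z₁) → (∀ u, b u ∈ Z₁) → Continuous τ →
      Continuous (fun u => lam (a u) (b u) (τ u)) := by
    intro a b τ ha hb ha1 hb1 hτ
    exact hlamc.comp ((ha.subtype_mk ha1).prodMk ((hb.subtype_mk hb1).prodMk hτ))
  -- Hausdorff consequence
  have hgeq : ∀ x y : X, (∀ n, (x, y) ∈ F n) → g x = g y := by
    intro x y h
    have h1 := hlim x (fun _ => x) (fun n _ => hdxx _ x) (fun _ => 0)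
    have h2 := hlim y (fun _ => x) (fun n _ => h (n - 1)) (fun _ => 0)
    exact tendsto_nhds_unique h1 h2
  -- the uniformity claim
  have claim : ∀ (x : X), ∀ V ∈ nhds (g x), ∃ N : ℕ, ∀ n, N ≤ n → ∀ x',
      (x', x) ∈ F (n - 1) → ∀ t, lam (gs n x') (gs (n + 1) x') t ∈ V := by
    intro x V hV
    by_contra hc
    push_neg at hc
    have hsel : ∀ n : ℕ, ∃ q : X × unitInterval, (q.1, x) ∈ F (n - 1) ∧
        ((∃ x', (x', x) ∈ F (n - 1) ∧ ∃ t, lam (gs n x') (gs (n + 1) x') t ∉ V) →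
          lam (gs n q.1) (gs (n + 1) q.1) q.2 ∉ V) := by
      intro n
      by_cases h : ∃ x', (x', x) ∈ F (n - 1) ∧ ∃ t, lam (gs n x') (gs (n + 1) x') t ∉ V
      · obtain ⟨x', hm, t, hv⟩ := h
        exact ⟨(x', t), hm, fun _ => hv⟩
      · exact ⟨(x, 0), hdxx _ x, fun h' => absurd h' h⟩
    choose q hqF hqV using hsel
    have htends := hlim x (fun n => (q n).1) (fun n _ => hqF n) (fun n => (q n).2)
    have hev : ∀ᶠ n in atTop, lam (gs n (q n).1) (gs (n + 1) (q n).1) (q n).2 ∈ V :=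
      htends.eventually (eventually_of_mem hV fun z hz => hz)
    obtain ⟨N₀, hN₀⟩ := eventually_atTop.mp hev
    obtain ⟨n, hn, x', hm, t, hv⟩ := hc N₀
    exact (hqV n ⟨x', hm, t, hv⟩) (hN₀ n hn)
  refine ⟨f, ?_, ?_, ?_, ?_, ?_⟩
  · -- formula on F (n-1) \ F n
    intro n hn p hp
    exact hfval p n hn hp.1 hp.2
  · -- value on ⋂ G n
    intro p hp
    refine hfS p fun n => ?_
    exact hGF n (Set.mem_iInter.mp hp (n + 1))
  · -- continuity in the second variable
    intro x
    rw [continuous_iff_continuousAt]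
    intro y₀
    by_cases hS : ∀ n, (x, y₀) ∈ F n
    · -- point in the intersection
      have hval : f (x, y₀) = g x := hfS _ hS
      rw [ContinuousAt, hval]
      rw [Filter.tendsto_def]
      intro V hV
      obtain ⟨N, hN⟩ := claim x V hV
      have hU : IsOpen ((fun y => (x, y)) ⁻¹' G (N + 1)) :=
        (hGopen (N + 1)).preimage (Continuous.prodMk_right x)
      have hy₀U : y₀ ∈ (fun y => (x, y)) ⁻¹' G (N + 1) :=
        hFG (N + 1) (hS (N + 1))
      refine Filter.mem_of_superset (hU.mem_nhds hy₀U) ?_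
      intro y hy
      simp only [Set.mem_preimage] at hy ⊢
      by_cases hS' : ∀ n, (x, y) ∈ F n
      · rw [hfS _ hS']
        exact mem_of_mem_nhds hV
      · have hm := hidx (x, y) hS'
        have hge := hidx_ge (x, y) N hS' hy
        rw [hfns _ hS']
        exact hN (idxF F (x, y)) (by omega) x (hdxx _ x) _
    · -- point outside the intersection
      obtain ⟨hn1, hmemF, hnot⟩ := hidx (x, y₀) hS
      rcases Nat.lt_or_ge (idxF F (x, y₀)) 2 with h2 | h2
      · -- n = 1
        have hn1' : idxF F (x, y₀) = 1 := by omega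
        have hU : IsOpen ((fun y => (x, y)) ⁻¹' (F 1)ᶜ) :=
          (hFclosed 1).isOpen_compl.preimage (Continuous.prodMk_right x)
        have hy₀U : y₀ ∈ (fun y => (x, y)) ⁻¹' (F 1)ᶜ := by
          simp only [Set.mem_preimage, Set.mem_compl_iff]
          rw [← hn1']; exact hnot
        have hcont : Continuous fun y => lam (gs 1 x) (gs 2 x) (φ 1 (x, y)) :=
          lamcont _ _ _ continuous_const continuous_const
            (fun _ => hgsmem 1 le_rfl x) (fun _ => hgsmem 2 (by omega) x)
            ((hφsep 1 le_rfl).1 x)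
        refine hcont.continuousAt.congr ?_
        refine Filter.eventuallyEq_of_mem (hU.mem_nhds hy₀U) ?_
        intro y hy
        simp only [Set.mem_preimage, Set.mem_compl_iff] at hy
        have h0 : (x, y) ∈ F 0 := by rw [hF0]; exact Set.mem_univ _
        exact (hfval (x, y) 1 le_rfl h0 hy).symm
      · -- n ≥ 2
        obtain ⟨m, hm2⟩ : ∃ m, idxF F (x, y₀) = m + 2 :=
          ⟨idxF F (x, y₀) - 2, by omega⟩
        rw [hm2] at hmemF hnot
        have hU : IsOpen ((fun y => (x, y)) ⁻¹' (G (m + 1) ∩ (F (m + 2))ᶜ)) :=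
          ((hGopen (m + 1)).inter (hFclosed (m + 2)).isOpen_compl).preimage
            (Continuous.prodMk_right x)
        have hy₀U : y₀ ∈ (fun y => (x, y)) ⁻¹' (G (m + 1) ∩ (F (m + 2))ᶜ) := by
          refine ⟨hFG (m + 1) ?_, hnot⟩
          simpa using hmemF
        have hin : ∀ y, lam (gs (m + 1) x) (gs (m + 2) x) (φ (m + 1) (x, y)) ∈ Z₁ :=
          fun y => hmem _ (hgsmem (m + 1) (by omega) x) _ (hgsmem (m + 2) (by omega) x) _
        have hcont : Continuous fun y =>
            lam (lam (gs (m + 1) x) (gs (m + 2) x) (φ (m + 1) (x, y)))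
              (gs (m + 3) x) (φ (m + 2) (x, y)) := by
          refine lamcont _ _ _ ?_ continuous_const hin
            (fun _ => hgsmem (m + 3) (by omega) x) ((hφsep (m + 2) (by omega)).1 x)
          exact lamcont _ _ _ continuous_const continuous_const
            (fun _ => hgsmem (m + 1) (by omega) x)
            (fun _ => hgsmem (m + 2) (by omega) x) ((hφsep (m + 1) (by omega)).1 x)
        refine hcont.continuousAt.congr ?_
        refine Filter.eventuallyEq_of_mem (hU.mem_nhds hy₀U) ?_
        intro y hy
        simp only [Set.mem_preimage, Set.mem_inter_iff, Set.mem_compl_iff] at hy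
        obtain ⟨hyG, hyF⟩ := hy
        by_cases hF1 : (x, y) ∈ F (m + 1)
        · have hval : f (x, y) = lam (gs (m + 2) x) (gs (m + 3) x) (φ (m + 2) (x, y)) := by
            have := hfval (x, y) (m + 2) (by omega) (by simpa using hF1) hyF
            simpa using this
          simp only [hval]
          have hφ1' : φ (m + 1) (x, y) = 1 := hφ1 (m + 1) (by omega) _ hF1
          rw [hφ1', hl1 _ (hgsmem (m + 1) (by omega) x) _ (hgsmem (m + 2) (by omega) x)]
        · have hFm : (x, y) ∈ F m := hGF m hyG
          have hval : f (x, y) = lam (gs (m + 1) x) (gs (m + 2) x) (φ (m + 1) (x, y)) := by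
            have := hfval (x, y) (m + 1) (by omega) (by simpa using hFm) hF1
            simpa using this
          simp only [hval]
          have hnG : (x, y) ∉ G (m + 2) := fun h => hF1 (hGF (m + 1) h)
          have hφ0' : φ (m + 2) (x, y) = 0 := hφ0 (m + 2) (by omega) _ hnG
          rw [hφ0', hl0 _ (hin y) _ (hgsmem (m + 3) (by omega) x)]
  · -- continuity in the first variable
    intro y
    rw [continuous_iff_continuousAt]
    intro x₀
    by_cases hS : ∀ n, (x₀, y) ∈ F n
    · -- point in the intersection
      have hval : f (x₀, y) = g x₀ := hfS _ hS
      have hgxy : g x₀ = g y := hgeq x₀ y hS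
      rw [ContinuousAt, hval, hgxy]
      rw [Filter.tendsto_def]
      intro V hV
      obtain ⟨N, hN⟩ := claim y V hV
      have hU : IsOpen ((fun x => (x, y)) ⁻¹' G (N + 1)) :=
        (hGopen (N + 1)).preimage (continuous_id.prodMk continuous_const)
      have hx₀U : x₀ ∈ (fun x => (x, y)) ⁻¹' G (N + 1) :=
        hFG (N + 1) (hS (N + 1))
      refine Filter.mem_of_superset (hU.mem_nhds hx₀U) ?_
      intro x hx
      simp only [Set.mem_preimage] at hx ⊢
      by_cases hS' : ∀ n, (x, y) ∈ F n
      · rw [hfS _ hS']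
        have : g x = g y := hgeq x y hS'
        rw [this]
        exact mem_of_mem_nhds hV
      · have hm := hidx (x, y) hS'
        have hge := hidx_ge (x, y) N hS' hx
        rw [hfns _ hS']
        exact hN (idxF F (x, y)) (by omega) x hm.2.1 _
    · -- point outside the intersection
      obtain ⟨hn1, hmemF, hnot⟩ := hidx (x₀, y) hS
      rcases Nat.lt_or_ge (idxF F (x₀, y)) 2 with h2 | h2
      · -- n = 1
        have hn1' : idxF F (x₀, y) = 1 := by omega
        have hU : IsOpen ((fun x => (x, y)) ⁻¹' (F 1)ᶜ) :=
          (hFclosed 1).isOpen_compl.preimage (continuous_id.prodMk continuous_const)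
        have hx₀U : x₀ ∈ (fun x => (x, y)) ⁻¹' (F 1)ᶜ := by
          simp only [Set.mem_preimage, Set.mem_compl_iff]
          rw [← hn1']; exact hnot
        have hcont : Continuous fun x => lam (gs 1 x) (gs 2 x) (φ 1 (x, y)) :=
          lamcont _ _ _ (hgscont 1 le_rfl) (hgscont 2 (by omega))
            (fun u => hgsmem 1 le_rfl u) (fun u => hgsmem 2 (by omega) u)
            ((hφsep 1 le_rfl).2 y)
        refine hcont.continuousAt.congr ?_
        refine Filter.eventuallyEq_of_mem (hU.mem_nhds hx₀U) ?_
        intro x hx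
        simp only [Set.mem_preimage, Set.mem_compl_iff] at hx
        have h0 : (x, y) ∈ F 0 := by rw [hF0]; exact Set.mem_univ _
        exact (hfval (x, y) 1 le_rfl h0 hx).symm
      · -- n ≥ 2
        obtain ⟨m, hm2⟩ : ∃ m, idxF F (x₀, y) = m + 2 :=
          ⟨idxF F (x₀, y) - 2, by omega⟩
        rw [hm2] at hmemF hnot
        have hU : IsOpen ((fun x => (x, y)) ⁻¹' (G (m + 1) ∩ (F (m + 2))ᶜ)) :=
          ((hGopen (m + 1)).inter (hFclosed (m + 2)).isOpen_compl).preimage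
            (continuous_id.prodMk continuous_const)
        have hx₀U : x₀ ∈ (fun x => (x, y)) ⁻¹' (G (m + 1) ∩ (F (m + 2))ᶜ) := by
          refine ⟨hFG (m + 1) ?_, hnot⟩
          simpa using hmemF
        have hin : ∀ x, lam (gs (m + 1) x) (gs (m + 2) x) (φ (m + 1) (x, y)) ∈ Z₁ :=
          fun x => hmem _ (hgsmem (m + 1) (by omega) x) _ (hgsmem (m + 2) (by omega) x) _
        have hcont : Continuous fun x =>
            lam (lam (gs (m + 1) x) (gs (m + 2) x) (φ (m + 1) (x, y)))
              (gs (m + 3) x) (φ (m + 2) (x, y)) := by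
          refine lamcont _ _ _ ?_ (hgscont (m + 3) (by omega)) hin
            (fun u => hgsmem (m + 3) (by omega) u) ((hφsep (m + 2) (by omega)).2 y)
          exact lamcont _ _ _ (hgscont (m + 1) (by omega)) (hgscont (m + 2) (by omega))
            (fun u => hgsmem (m + 1) (by omega) u)
            (fun u => hgsmem (m + 2) (by omega) u) ((hφsep (m + 1) (by omega)).2 y)
        refine hcont.continuousAt.congr ?_
        refine Filter.eventuallyEq_of_mem (hU.mem_nhds hx₀U) ?_
        intro x hx
        simp only [Set.mem_preimage, Set.mem_inter_iff, Set.mem_compl_iff] at hx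
        obtain ⟨hxG, hxF⟩ := hx
        by_cases hF1 : (x, y) ∈ F (m + 1)
        · have hval : f (x, y) = lam (gs (m + 2) x) (gs (m + 3) x) (φ (m + 2) (x, y)) := by
            have := hfval (x, y) (m + 2) (by omega) (by simpa using hF1) hxF
            simpa using this
          simp only [hval]
          have hφ1' : φ (m + 1) (x, y) = 1 := hφ1 (m + 1) (by omega) _ hF1
          rw [hφ1', hl1 _ (hgsmem (m + 1) (by omega) x) _ (hgsmem (m + 2) (by omega) x)]
        · have hFm : (x, y) ∈ F m := hGF m hxG
          have hval : f (x, y) = lam (gs (m + 1) x) (gs (m + 2) x) (φ (m + 1) (x, y)) := by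
            have := hfval (x, y) (m + 1) (by omega) (by simpa using hFm) hF1
            simpa using this
          simp only [hval]
          have hnG : (x, y) ∉ G (m + 2) := fun h => hF1 (hGF (m + 1) h)
          have hφ0' : φ (m + 2) (x, y) = 0 := hφ0 (m + 2) (by omega) _ hnG
          rw [hφ0', hl0 _ (hin x) _ (hgsmem (m + 3) (by omega) x)]
  · -- diagonal
    intro x
    exact hfS (x, x) (fun n => hdxx n x)
end
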